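/- arXiv:2106.00513 — 3 statements merged into one kernel-verified Lean document; each statement's English description precedes it below -/
import Mathlib

section
/- Let n be a positive integer, let M be a perfect matching of the balanced papillon graph P_n, and let X be its principal 4-edge-cut. Then for every j ∈ {1,…,2n}, the number of edges of M in ∂T_j equals the number of edges of M in X, i.e., |M ∩ ∂T_j| = |M ∩ X|. -/
open SimpleGraph


/-- Vertices of the papillon graph `P_{r,ℓ}`: `(false, i)` is the outer vertex `u_i`
and `(true, i)` is the inner vertex `v_i`, where indices are taken in `ZMod (2(r+ℓ))`
(so the 1-based index `i ∈ {1, …, 2(r+ℓ)}` corresponds to `i mod 2(r+ℓ)`). -/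
abbrev PapVert (N : ℕ) : Type := Bool × ZMod N

/-- The outer vertex `u_i` (1-based index `i`). -/
def pu (N : ℕ) (i : ℕ) : PapVert N := (false, (i : ZMod N))

/-- The inner vertex `v_i` (1-based index `i`). -/
def pv (N : ℕ) (i : ℕ) : PapVert N := (true, (i : ZMod N))

/-- The edge set of the papillon graph `P_{r,ℓ}`: the outer-cycle edges, the spokes,
and the inner-cycle edges. -/
def papillonEdges (r l : ℕ) : Set (Sym2 (PapVert (2 * (r + l)))) :=
  {e | (∃ i, 1 ≤ i ∧ i ≤ 2 * (r + l) - 1 ∧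
          e = s(pu (2 * (r + l)) i, pu (2 * (r + l)) (i + 1)))
      ∨ e = s(pu (2 * (r + l)) (2 * (r + l)), pu (2 * (r + l)) 1)
      ∨ (∃ i, 1 ≤ i ∧ i ≤ 2 * (r + l) ∧
          e = s(pu (2 * (r + l)) i, pv (2 * (r + l)) i))
      ∨ (∃ i, 1 ≤ i ∧ i ≤ r + l ∧
          e = s(pv (2 * (r + l)) (2 * i - 1), pv (2 * (r + l)) (2 * i)))
      ∨ (∃ i, 1 ≤ i ∧ i ≤ r + l - 1 ∧ i ≠ min r l ∧
          e = s(pv (2 * (r + l)) (2 * i - 1), pv (2 * (r + l)) (2 * i + 2)))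
      ∨ e = s(pv (2 * (r + l)) 2, pv (2 * (r + l)) (2 * min r l + 2))
      ∨ e = s(pv (2 * (r + l)) (2 * min r l - 1), pv (2 * (r + l)) (2 * (r + l) - 1))}

/-- The papillon graph `P_{r,ℓ}`. -/
def papillon (r l : ℕ) : SimpleGraph (PapVert (2 * (r + l))) :=
  SimpleGraph.fromEdgeSet (papillonEdges r l)


/-- `M` is a perfect matching of `G`, viewed as a set of edges: every vertex lies on
exactly one edge of `M`. -/
def IsPerfMatching {V : Type*} (G : SimpleGraph V) (M : Set (Sym2 V)) : Prop :=
  M ⊆ G.edgeSet ∧ ∀ v : V, ∃! e, e ∈ M ∧ v ∈ e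

/-- `F` is (the edge set of) a 2-factor of `G`: a spanning subgraph in which every
vertex is incident with exactly two edges of `F`. -/
def Is2Factor {V : Type*} (G : SimpleGraph V) (F : Set (Sym2 V)) : Prop :=
  F ⊆ G.edgeSet ∧ ∀ v : V, ∃ e₁ e₂, e₁ ≠ e₂ ∧ e₁ ∈ F ∧ e₂ ∈ F ∧ v ∈ e₁ ∧ v ∈ e₂ ∧
    ∀ e ∈ F, v ∈ e → e = e₁ ∨ e = e₂

/-- Every cycle of `G` all of whose edges lie in `F` has even length. -/
def HasOnlyEvenCycles {V : Type*} (G : SimpleGraph V) (F : Set (Sym2 V)) : Prop :=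
  ∀ (x : V) (c : G.Walk x x), c.IsCycle → (∀ e ∈ c.edges, e ∈ F) → Even c.length

/-- `G` is even-2-factorable: every 2-factor of `G` contains only even cycles. -/
def IsE2F {V : Type*} (G : SimpleGraph V) : Prop :=
  ∀ F, Is2Factor G F → HasOnlyEvenCycles G F

/-- `S` is the edge set of a Hamiltonian cycle of `G`. -/
def IsHamCycleSet {V : Type*} [DecidableEq V] (G : SimpleGraph V) (S : Set (Sym2 V)) : Prop :=
  ∃ (x : V) (c : G.Walk x x), c.IsHamiltonianCycle ∧ S = {e | e ∈ c.edges}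

/-- `G` has the Perfect-Matching-Hamiltonian property. -/
def HasPMH {V : Type*} [DecidableEq V] (G : SimpleGraph V) : Prop :=
  ∀ M, IsPerfMatching G M → ∃ N, IsPerfMatching G N ∧ IsHamCycleSet G (M ∪ N)

/-- The principal 4-edge-cut `X = {a, b, c, d}` of the balanced papillon graph `P_n`,
where `a = u₁u_{4n}`, `b = v_{2n-1}v_{4n-1}`, `c = v₂v_{2n+2}`, `d = u_{2n}u_{2n+1}`. -/
def Xcut (n : ℕ) : Set (Sym2 (PapVert (2 * (n + n)))) :=
  {s(pu (2 * (n + n)) 1, pu (2 * (n + n)) (4 * n)),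
   s(pv (2 * (n + n)) (2 * n - 1), pv (2 * (n + n)) (4 * n - 1)),
   s(pv (2 * (n + n)) 2, pv (2 * (n + n)) (2 * n + 2)),
   s(pu (2 * (n + n)) (2 * n), pu (2 * (n + n)) (2 * n + 1))}

/-- The vertex set `{u_{2j-1}, u_{2j}, v_{2j-1}, v_{2j}}` of the 4-pole `T_j` of `P_n`. -/
def Tverts (n j : ℕ) : Set (PapVert (2 * (n + n))) :=
  {pu (2 * (n + n)) (2 * j - 1), pu (2 * (n + n)) (2 * j),
   pv (2 * (n + n)) (2 * j - 1), pv (2 * (n + n)) (2 * j)}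

/-- `∂T_j`: the set of edges of `P_n` with exactly one endpoint in
`{u_{2j-1}, u_{2j}, v_{2j-1}, v_{2j}}`. -/
def boundaryT (n j : ℕ) : Set (Sym2 (PapVert (2 * (n + n)))) :=
  {e | e ∈ (papillon n n).edgeSet ∧ ∃ x y, e = s(x, y) ∧ x ∈ Tverts n j ∧ y ∉ Tverts n j}


-- ===== auxiliary development =====


lemma eq_of_castZMod_eq {m A B : ℕ} (h : (A : ZMod m) = B) (hA : A < B + m) (hB : B < A + m) :
    A = B := by
  have h1 : A ≡ B [MOD m] := (ZMod.natCast_eq_natCast_iff A B m).1 h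
  have h2 : (m:ℤ) ∣ (B:ℤ) - A := Nat.modEq_iff_dvd.1 h1
  rcases h2 with ⟨t, ht⟩
  rcases lt_trichotomy t 0 with h' | h' | h'
  · have h3 : (m:ℤ) * t ≤ -(m:ℤ) := by
      have := mul_le_mul_of_nonneg_left (show t ≤ -1 by omega) (show (0:ℤ) ≤ m by positivity)
      simpa using this
    omega
  · subst h'; simp at ht; omega
  · have h3 : (m:ℤ) ≤ m * t := by
      have := mul_le_mul_of_nonneg_left (show (1:ℤ) ≤ t by omega) (show (0:ℤ) ≤ m by positivity)
      simpa using this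
    omega

lemma castZMod_ne {m A B : ℕ} (hne : A ≠ B) (hA : A < B + m) (hB : B < A + m) :
    (A : ZMod m) ≠ B := fun h => hne (eq_of_castZMod_eq h hA hB)

lemma castZMod_add {m : ℕ} (A B k : ℕ) (h : A + k = B) :
    (A : ZMod m) + (k : ℕ) = (B : ZMod m) := by subst h; push_cast; ring

lemma castZMod_drop {m A B : ℕ} (h : A + m = B) : (B : ZMod m) = A := by
  subst h; push_cast; simp


lemma modeq2_of_cast {n A B : ℕ} (h : (A : ZMod (2*(n+n))) = B) : A % 2 = B % 2 := by
  have h1 := (ZMod.natCast_eq_natCast_iff A B _).1 h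
  exact Nat.ModEq.of_dvd ⟨n+n, rfl⟩ h1

lemma castZMod_succ {m : ℕ} (A B : ℕ) (h : A + 1 = B) : (A : ZMod m) + 1 = (B : ZMod m) := by
  subst h; push_cast; ring
def vv (n : ℕ) (b : Bool) (k : ℕ) : PapVert (2*(n+n)) := (b, (k : ZMod (2*(n+n))))

def eL1 (n J : ℕ) : Sym2 (PapVert (2*(n+n))) := s(vv n false (2*J), vv n false (2*J+1))
def Ea (n J : ℕ) : Sym2 (PapVert (2*(n+n))) := s(vv n false (2*J+1), vv n false (2*J+2))
def eR1 (n J : ℕ) : Sym2 (PapVert (2*(n+n))) := s(vv n false (2*J+2), vv n false (2*J+3))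
def Es1 (n J : ℕ) : Sym2 (PapVert (2*(n+n))) := s(vv n false (2*J+1), vv n true (2*J+1))
def Es2 (n J : ℕ) : Sym2 (PapVert (2*(n+n))) := s(vv n false (2*J+2), vv n true (2*J+2))
def Eb (n J : ℕ) : Sym2 (PapVert (2*(n+n))) := s(vv n true (2*J+1), vv n true (2*J+2))
def eR2 (n J : ℕ) : Sym2 (PapVert (2*(n+n))) :=
  s(vv n true (2*J+1), vv n true (if J+1 = n ∨ J+1 = 2*n then 2*J+1+2*n else 2*J+4))
def eL2 (n J : ℕ) : Sym2 (PapVert (2*(n+n))) :=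
  s(vv n true (2*J+2), vv n true (if J = 0 ∨ J = n then 2*J+2+2*n else 2*J-1))

lemma incident_u (n : ℕ) (e : Sym2 (PapVert (2*(n+n)))) (he : e ∈ papillonEdges n n)
    (z : ZMod (2*(n+n))) (hz : (false, z) ∈ e) :
    e = s((false, z), (false, z+1)) ∨ e = s((false, z - 1), (false, z))
      ∨ e = s((false, z), (true, z)) := by
  simp only [papillonEdges, Set.mem_setOf_eq] at he
  rcases he with ⟨i, hi1, hi2, rfl⟩ | rfl | ⟨i, hi1, hi2, rfl⟩ | ⟨i, hi1, hi2, rfl⟩ |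
    ⟨i, hi1, hi2, hi3, rfl⟩ | rfl | rfl
  · simp only [pu, Sym2.mem_iff, Prod.mk.injEq] at hz
    rcases hz with ⟨-, hz⟩ | ⟨-, hz⟩
    · left; subst hz; simp only [pu]; push_cast; rfl
    · right; left
      push_cast at hz
      have h1 : (i : ZMod (2*(n+n))) = z - 1 := by rw [eq_sub_iff_add_eq, ← hz]
      simp only [pu]; push_cast; rw [h1]; simp
  · have h0 : ((2*(n+n) : ℕ) : ZMod (2*(n+n))) = 0 := ZMod.natCast_self _
    simp only [pu, Sym2.mem_iff, Prod.mk.injEq, h0, Nat.cast_one] at hz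
    rcases hz with ⟨-, hz⟩ | ⟨-, hz⟩
    · left; subst hz; simp only [pu, h0, Nat.cast_one]; norm_num
    · right; left; subst hz; simp only [pu, h0, Nat.cast_one]; norm_num
  · simp only [pu, pv, Sym2.mem_iff, Prod.mk.injEq] at hz
    rcases hz with ⟨-, hz⟩ | ⟨h, -⟩
    · right; right; subst hz; rfl
    · exact absurd h (by simp)
  all_goals {
    simp only [pv, Sym2.mem_iff, Prod.mk.injEq] at hz
    rcases hz with ⟨h, -⟩ | ⟨h, -⟩ <;> exact absurd h (by simp) }


lemma incident_v_odd (n J : ℕ) (hn : 1 ≤ n) (hJ : J < 2*n) (e : Sym2 (PapVert (2*(n+n))))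
    (he : e ∈ papillonEdges n n) (hz : (true, ((2*J+1 : ℕ) : ZMod (2*(n+n)))) ∈ e) :
    e = Es1 n J ∨ e = Eb n J ∨ e = eR2 n J := by
  simp only [papillonEdges, Set.mem_setOf_eq, min_self] at he
  rcases he with ⟨i, hi1, hi2, rfl⟩ | rfl | ⟨i, hi1, hi2, rfl⟩ | ⟨i, hi1, hi2, rfl⟩ |
    ⟨i, hi1, hi2, hi3, rfl⟩ | rfl | rfl
  · simp only [pu, Sym2.mem_iff, Prod.mk.injEq] at hz; tauto
  · simp only [pu, Sym2.mem_iff, Prod.mk.injEq] at hz; tauto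
  · -- spoke
    simp only [pu, pv, Sym2.mem_iff, Prod.mk.injEq, true_and] at hz
    rcases hz with ⟨h, -⟩ | hz
    · exact absurd h (by simp)
    · left; simp only [pu, pv, Es1, vv, ← hz]
  · -- pair edge
    simp only [pv, Sym2.mem_iff, Prod.mk.injEq, true_and] at hz
    rcases hz with hz | hz
    · right; left
      have e2 : ((2*i : ℕ) : ZMod (2*(n+n))) = ((2*J+2 : ℕ) : ZMod (2*(n+n))) := by
        rw [← castZMod_add (2*i-1) (2*i) 1 (by omega), ← hz,
          castZMod_add (2*J+1) (2*J+2) 1 rfl]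
      simp only [pv, Eb, vv, ← hz, e2]
    · have := modeq2_of_cast hz; omega
  · -- cross edge
    simp only [pv, Sym2.mem_iff, Prod.mk.injEq, true_and] at hz
    rcases hz with hz | hz
    · right; right
      have hrec : 2*J+1 = 2*i-1 := eq_of_castZMod_eq hz (by omega) (by omega)
      have hiJ : i = J+1 := by omega
      subst hiJ
      rw [eR2, if_neg (by omega : ¬(J+1 = n ∨ J+1 = 2*n))]
      simp only [pv, vv, show 2*(J+1)-1 = 2*J+1 from by omega,
        show 2*(J+1)+2 = 2*J+4 from by omega]
    · have := modeq2_of_cast hz; omega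
  · -- edge c
    simp only [pv, Sym2.mem_iff, Prod.mk.injEq, true_and] at hz
    rcases hz with hz | hz <;> · have := modeq2_of_cast hz; omega
  · -- edge b
    simp only [pv, Sym2.mem_iff, Prod.mk.injEq, true_and] at hz
    rcases hz with hz | hz
    · right; right
      have hrec : 2*J+1 = 2*n-1 := eq_of_castZMod_eq hz (by omega) (by omega)
      rw [eR2, if_pos (Or.inl (by omega : J+1 = n))]
      simp only [pv, vv, show 2*n-1 = 2*J+1 from by omega,
        show 2*(n+n)-1 = 2*J+1+2*n from by omega]
    · right; right
      have hrec : 2*J+1 = 2*(n+n)-1 := eq_of_castZMod_eq hz (by omega) (by omega)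
      rw [eR2, if_pos (Or.inr (by omega : J+1 = 2*n))]
      rw [Sym2.eq_swap]
      have hd : ((2*J+1+2*n : ℕ) : ZMod (2*(n+n))) = ((2*n-1 : ℕ) : ZMod (2*(n+n))) :=
        castZMod_drop (by omega)
      simp only [pv, vv, hd, show 2*(n+n)-1 = 2*J+1 from by omega]

lemma incident_v_even (n J : ℕ) (hn : 1 ≤ n) (hJ : J < 2*n) (e : Sym2 (PapVert (2*(n+n))))
    (he : e ∈ papillonEdges n n) (hz : (true, ((2*J+2 : ℕ) : ZMod (2*(n+n)))) ∈ e) :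
    e = Es2 n J ∨ e = Eb n J ∨ e = eL2 n J := by
  simp only [papillonEdges, Set.mem_setOf_eq, min_self] at he
  rcases he with ⟨i, hi1, hi2, rfl⟩ | rfl | ⟨i, hi1, hi2, rfl⟩ | ⟨i, hi1, hi2, rfl⟩ |
    ⟨i, hi1, hi2, hi3, rfl⟩ | rfl | rfl
  · simp only [pu, Sym2.mem_iff, Prod.mk.injEq] at hz; tauto
  · simp only [pu, Sym2.mem_iff, Prod.mk.injEq] at hz; tauto
  · -- spoke
    simp only [pu, pv, Sym2.mem_iff, Prod.mk.injEq, true_and] at hz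
    rcases hz with ⟨h, -⟩ | hz
    · exact absurd h (by simp)
    · left; simp only [pu, pv, Es2, vv, ← hz]
  · -- pair edge
    simp only [pv, Sym2.mem_iff, Prod.mk.injEq, true_and] at hz
    rcases hz with hz | hz
    · have := modeq2_of_cast hz; omega
    · right; left
      have e1 : ((2*i-1 : ℕ) : ZMod (2*(n+n))) = ((2*J+1 : ℕ) : ZMod (2*(n+n))) := by
        have h2 := castZMod_add (m := 2*(n+n)) (2*i-1) (2*i) 1 (by omega)
        have h3 := castZMod_add (m := 2*(n+n)) (2*J+1) (2*J+2) 1 rfl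
        rw [← hz] at h2; rw [← h2] at h3
        exact (add_right_cancel h3).symm
      simp only [pv, Eb, vv, ← hz, e1]
  · -- cross edge
    simp only [pv, Sym2.mem_iff, Prod.mk.injEq, true_and] at hz
    rcases hz with hz | hz
    · have := modeq2_of_cast hz; omega
    · right; right
      have hrec : 2*J+2 = 2*i+2 := eq_of_castZMod_eq hz (by omega) (by omega)
      have hiJ : i = J := by omega
      subst hiJ
      rw [eL2, if_neg (by omega : ¬(i = 0 ∨ i = n))]
      rw [Sym2.eq_swap]
      simp only [pv, vv]
  · -- edge c
    simp only [pv, Sym2.mem_iff, Prod.mk.injEq, true_and] at hz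
    rcases hz with hz | hz
    · right; right
      have hrec : 2*J+2 = 2 := eq_of_castZMod_eq hz (by omega) (by omega)
      rw [eL2, if_pos (Or.inl (by omega : J = 0))]
      have hc2 : ((2 : ℕ) : ZMod (2*(n+n))) = ((2*J+2 : ℕ) : ZMod (2*(n+n))) :=
        congrArg _ (by omega)
      have hcn : ((2*n+2 : ℕ) : ZMod (2*(n+n))) = ((2*J+2+2*n : ℕ) : ZMod (2*(n+n))) :=
        congrArg _ (by omega)
      simp only [pv, vv, hc2, hcn]
    · right; right
      have hrec : 2*J+2 = 2*n+2 := eq_of_castZMod_eq hz (by omega) (by omega)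
      rw [eL2, if_pos (Or.inr (by omega : J = n))]
      rw [Sym2.eq_swap]
      have hd : ((2*J+2+2*n : ℕ) : ZMod (2*(n+n))) = ((2 : ℕ) : ZMod (2*(n+n))) :=
        castZMod_drop (by omega)
      have hcn : ((2*n+2 : ℕ) : ZMod (2*(n+n))) = ((2*J+2 : ℕ) : ZMod (2*(n+n))) :=
        congrArg _ (by omega)
      simp only [pv, vv, hd, hcn]
  · -- edge b
    simp only [pv, Sym2.mem_iff, Prod.mk.injEq, true_and] at hz
    rcases hz with hz | hz <;> · have := modeq2_of_cast hz; omega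

open scoped Classical in
lemma pair_count {α : Type*} (M : Set α) (e1 e2 : α) (h : e1 ≠ e2) :
    (M ∩ {e1, e2}).ncard =
      (if e1 ∈ M then 1 else 0) + (if e2 ∈ M then 1 else 0) := by
  by_cases h1 : e1 ∈ M <;> by_cases h2 : e2 ∈ M <;>
    simp only [h1, h2, if_true, if_false]
  · have hs : M ∩ {e1, e2} = {e1, e2} := by
      ext x
      constructor
      · rintro ⟨-, hx⟩; exact hx
      · rintro (rfl | rfl) <;> exact ⟨by assumption, by simp⟩
    rw [hs]; exact Set.ncard_pair h
  · have hs : M ∩ {e1, e2} = {e1} := by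
      ext x
      constructor
      · rintro ⟨hx, rfl | rfl⟩
        · rfl
        · exact absurd hx h2
      · rintro rfl; exact ⟨h1, by simp⟩
    rw [hs]; exact Set.ncard_singleton e1
  · have hs : M ∩ {e1, e2} = {e2} := by
      ext x
      constructor
      · rintro ⟨hx, rfl | rfl⟩
        · exact absurd hx h1
        · rfl
      · rintro rfl; exact ⟨h2, by simp⟩
    rw [hs]; exact Set.ncard_singleton e2
  · have hs : M ∩ {e1, e2} = ∅ := by
      ext x
      constructor
      · rintro ⟨hx, rfl | rfl⟩
        · exact absurd hx h1
        · exact absurd hx h2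
      · rintro ⟨⟩
    rw [hs]; exact Set.ncard_empty _

set_option maxHeartbeats 1000000 in
lemma blockLemma {V : Type*} (M : Set (Sym2 V)) (a1 a2 b1 b2 : V)
    (L1 L2 R1 R2 : Sym2 V)
    (hu1 : ∃! e, e ∈ M ∧ a1 ∈ e) (hu2 : ∃! e, e ∈ M ∧ a2 ∈ e)
    (hu3 : ∃! e, e ∈ M ∧ b1 ∈ e) (hu4 : ∃! e, e ∈ M ∧ b2 ∈ e)
    (m1 : a1 ∈ L1) (m2 : b2 ∈ L2) (m3 : a2 ∈ R1) (m4 : b1 ∈ R2)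
    (i1 : ∀ e ∈ M, a1 ∈ e → e = L1 ∨ e = s(a1,a2) ∨ e = s(a1,b1))
    (i2 : ∀ e ∈ M, a2 ∈ e → e = R1 ∨ e = s(a1,a2) ∨ e = s(a2,b2))
    (i3 : ∀ e ∈ M, b1 ∈ e → e = R2 ∨ e = s(b1,b2) ∨ e = s(a1,b1))
    (i4 : ∀ e ∈ M, b2 ∈ e → e = L2 ∨ e = s(b1,b2) ∨ e = s(a2,b2))
    (d1 : L1 ≠ s(a1,a2)) (d2 : L1 ≠ s(a1,b1))
    (d3 : L2 ≠ s(b1,b2)) (d4 : L2 ≠ s(a2,b2))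
    (d5 : R1 ≠ s(a1,a2)) (d6 : R1 ≠ s(a2,b2))
    (d7 : R2 ≠ s(b1,b2)) (d8 : R2 ≠ s(a1,b1))
    (d9 : s(b1,b2) ≠ s(a2,b2)) (d10 : s(b1,b2) ≠ s(a1,b1))
    (d11 : s(a1,a2) ≠ s(a1,b1)) (d12 : s(a1,a2) ≠ s(a2,b2))
    (dl : L1 ≠ L2) (dr : R1 ≠ R2) :
    (M ∩ {L1, L2}).ncard = (M ∩ {R1, R2}).ncard := by
  classical
  -- uniqueness helper
  have uniq : ∀ (v : V) (e f : Sym2 V), (∃! e, e ∈ M ∧ v ∈ e) →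
      e ∈ M → v ∈ e → f ∈ M → v ∈ f → e = f := by
    rintro v e f ⟨g, -, hg⟩ he hve hf hvf
    rw [hg e ⟨he, hve⟩, hg f ⟨hf, hvf⟩]
  have hA : (L1 ∈ M ∧ L2 ∈ M) ↔ (R1 ∈ M ∧ R2 ∈ M) := by
    constructor
    · rintro ⟨hL1, hL2⟩
      obtain ⟨e2, ⟨he2, hv2⟩, -⟩ := hu2
      obtain ⟨e3, ⟨he3, hv3⟩, -⟩ := hu3
      rcases i2 e2 he2 hv2 with rfl | rfl | rfl
      · rcases i3 e3 he3 hv3 with rfl | rfl | rfl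
        · exact ⟨he2, he3⟩
        · exact absurd (uniq b2 L2 s(b1,b2) hu4 hL2 m2 he3 (by simp)) d3
        · exact absurd (uniq a1 L1 s(a1,b1) hu1 hL1 m1 he3 (by simp)) d2
      · exact absurd (uniq a1 L1 s(a1,a2) hu1 hL1 m1 he2 (by simp)) d1
      · exact absurd (uniq b2 L2 s(a2,b2) hu4 hL2 m2 he2 (by simp)) d4
    · rintro ⟨hR1, hR2⟩
      obtain ⟨e1, ⟨he1, hv1⟩, -⟩ := hu1
      obtain ⟨e4, ⟨he4, hv4⟩, -⟩ := hu4
      rcases i1 e1 he1 hv1 with rfl | rfl | rfl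
      · rcases i4 e4 he4 hv4 with rfl | rfl | rfl
        · exact ⟨he1, he4⟩
        · exact absurd (uniq b1 R2 s(b1,b2) hu3 hR2 m4 he4 (by simp)) d7
        · exact absurd (uniq a2 R1 s(a2,b2) hu2 hR1 m3 he4 (by simp)) d6
      · exact absurd (uniq a2 R1 s(a1,a2) hu2 hR1 m3 he1 (by simp)) d5
      · exact absurd (uniq b1 R2 s(a1,b1) hu3 hR2 m4 he1 (by simp)) d8
  have hB : (L1 ∈ M ∨ L2 ∈ M) ↔ (R1 ∈ M ∨ R2 ∈ M) := by
    constructor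
    · intro hL
      by_contra hR
      push_neg at hR
      obtain ⟨hR1, hR2⟩ := hR
      obtain ⟨e2, ⟨he2, hv2⟩, -⟩ := hu2
      obtain ⟨e3, ⟨he3, hv3⟩, -⟩ := hu3
      rcases i2 e2 he2 hv2 with rfl | rfl | rfl
      · exact hR1 he2
      · rcases i3 e3 he3 hv3 with rfl | rfl | rfl
        · exact hR2 he3
        · -- e2 = s(a1,a2) ∈ M, e3 = s(b1,b2) ∈ M : all four matched internally
          rcases hL with hL | hL
          · exact absurd (uniq a1 L1 s(a1,a2) hu1 hL m1 he2 (by simp)) d1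
          · exact absurd (uniq b2 L2 s(b1,b2) hu4 hL m2 he3 (by simp)) d3
        · exact absurd (uniq a1 s(a1,a2) s(a1,b1) hu1 he2 (by simp) he3 (by simp)) d11
      · rcases i3 e3 he3 hv3 with rfl | rfl | rfl
        · exact hR2 he3
        · exact absurd (uniq b2 s(a2,b2) s(b1,b2) hu4 he2 (by simp) he3 (by simp)) d9.symm
        · rcases hL with hL | hL
          · exact absurd (uniq a1 L1 s(a1,b1) hu1 hL m1 he3 (by simp)) d2
          · exact absurd (uniq b2 L2 s(a2,b2) hu4 hL m2 he2 (by simp)) d4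
    · intro hR
      by_contra hL
      push_neg at hL
      obtain ⟨hL1, hL2⟩ := hL
      obtain ⟨e1, ⟨he1, hv1⟩, -⟩ := hu1
      obtain ⟨e4, ⟨he4, hv4⟩, -⟩ := hu4
      rcases i1 e1 he1 hv1 with rfl | rfl | rfl
      · exact hL1 he1
      · rcases i4 e4 he4 hv4 with rfl | rfl | rfl
        · exact hL2 he4
        · rcases hR with hR | hR
          · exact absurd (uniq a2 R1 s(a1,a2) hu2 hR m3 he1 (by simp)) d5
          · exact absurd (uniq b1 R2 s(b1,b2) hu3 hR m4 he4 (by simp)) d7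
        · exact absurd (uniq a2 s(a1,a2) s(a2,b2) hu2 he1 (by simp) he4 (by simp)) d12
      · rcases i4 e4 he4 hv4 with rfl | rfl | rfl
        · exact hL2 he4
        · exact absurd (uniq b1 s(a1,b1) s(b1,b2) hu3 he1 (by simp) he4 (by simp)) d10.symm
        · rcases hR with hR | hR
          · exact absurd (uniq a2 R1 s(a2,b2) hu2 hR m3 he4 (by simp)) d6
          · exact absurd (uniq b1 R2 s(a1,b1) hu3 hR m4 he1 (by simp)) d8
  rw [pair_count M L1 L2 dl, pair_count M R1 R2 dr]
  by_cases h1 : L1 ∈ M <;> by_cases h2 : L2 ∈ M <;>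
    by_cases h3 : R1 ∈ M <;> by_cases h4 : R2 ∈ M <;>
    simp only [h1, h2, h3, h4, if_true, if_false] <;> first | rfl | omega | tauto

lemma inc_a1 (n J : ℕ) (e : Sym2 (PapVert (2*(n+n)))) (he : e ∈ papillonEdges n n)
    (hv : vv n false (2*J+1) ∈ e) : e = eL1 n J ∨ e = Ea n J ∨ e = Es1 n J := by
  rcases incident_u n e he ((2*J+1 : ℕ) : ZMod (2*(n+n))) hv with h | h | h
  · rw [castZMod_succ (2*J+1) (2*J+2) rfl] at h
    exact Or.inr (Or.inl h)
  · rw [← eq_sub_of_add_eq (castZMod_succ (m := 2*(n+n)) (2*J) (2*J+1) rfl)] at h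
    exact Or.inl h
  · exact Or.inr (Or.inr h)

lemma inc_a2 (n J : ℕ) (e : Sym2 (PapVert (2*(n+n)))) (he : e ∈ papillonEdges n n)
    (hv : vv n false (2*J+2) ∈ e) : e = eR1 n J ∨ e = Ea n J ∨ e = Es2 n J := by
  rcases incident_u n e he ((2*J+2 : ℕ) : ZMod (2*(n+n))) hv with h | h | h
  · rw [castZMod_succ (2*J+2) (2*J+3) rfl] at h
    exact Or.inl h
  · rw [← eq_sub_of_add_eq (castZMod_succ (m := 2*(n+n)) (2*J+1) (2*J+2) rfl)] at h
    exact Or.inr (Or.inl h)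
  · exact Or.inr (Or.inr h)


lemma block_eq (n J : ℕ) (hn : 1 ≤ n) (hJ : J < 2*n)
    (M : Set (Sym2 (PapVert (2*(n+n)))))
    (hsub : M ⊆ papillonEdges n n)
    (huniq : ∀ v : PapVert (2*(n+n)), ∃! e, e ∈ M ∧ v ∈ e) :
    (M ∩ {eL1 n J, eL2 n J}).ncard = (M ∩ {eR1 n J, eR2 n J}).ncard := by
  have ne01 : ((2*J : ℕ) : ZMod (2*(n+n))) ≠ ((2*J+1 : ℕ) : ZMod (2*(n+n))) :=
    castZMod_ne (by omega) (by omega) (by omega)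
  have ne02 : ((2*J : ℕ) : ZMod (2*(n+n))) ≠ ((2*J+2 : ℕ) : ZMod (2*(n+n))) :=
    castZMod_ne (by omega) (by omega) (by omega)
  have ne12 : ((2*J+1 : ℕ) : ZMod (2*(n+n))) ≠ ((2*J+2 : ℕ) : ZMod (2*(n+n))) :=
    castZMod_ne (by omega) (by omega) (by omega)
  have ne31 : ((2*J+3 : ℕ) : ZMod (2*(n+n))) ≠ ((2*J+1 : ℕ) : ZMod (2*(n+n))) :=
    castZMod_ne (by omega) (by omega) (by omega)
  have hWL1 : ((if J = 0 ∨ J = n then 2*J+2+2*n else 2*J-1 : ℕ) : ZMod (2*(n+n)))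
      ≠ ((2*J+1 : ℕ) : ZMod (2*(n+n))) := by
    split_ifs with h <;> exact castZMod_ne (by omega) (by omega) (by omega)
  have hWR2 : ((if J+1 = n ∨ J+1 = 2*n then 2*J+1+2*n else 2*J+4 : ℕ) : ZMod (2*(n+n)))
      ≠ ((2*J+2 : ℕ) : ZMod (2*(n+n))) := by
    split_ifs with h <;> exact castZMod_ne (by omega) (by omega) (by omega)
  refine blockLemma M (vv n false (2*J+1)) (vv n false (2*J+2)) (vv n true (2*J+1))
    (vv n true (2*J+2)) (eL1 n J) (eL2 n J) (eR1 n J) (eR2 n J)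
    (huniq _) (huniq _) (huniq _) (huniq _)
    (by simp [eL1]) (by simp [eL2]) (by simp [eR1]) (by simp [eR2])
    ?_ ?_ ?_ ?_ ?_ ?_ ?_ ?_ ?_ ?_ ?_ ?_ ?_ ?_ ?_ ?_ ?_ ?_
  · -- i1
    intro e he hve
    exact inc_a1 n J e (hsub he) hve
  · -- i2
    intro e he hve
    exact inc_a2 n J e (hsub he) hve
  · -- i3
    intro e he hve
    rcases incident_v_odd n J hn hJ e (hsub he) hve with h | h | h
    · exact Or.inr (Or.inr h)
    · exact Or.inr (Or.inl h)
    · exact Or.inl h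
  · -- i4
    intro e he hve
    rcases incident_v_even n J hn hJ e (hsub he) hve with h | h | h
    · exact Or.inr (Or.inr h)
    · exact Or.inr (Or.inl h)
    · exact Or.inl h
  -- d1 : eL1 ≠ s(a1,a2)
  · intro h
    rw [eL1, Sym2.eq_iff] at h
    simp only [vv, Prod.mk.injEq, eq_self_iff_true, true_and, and_true] at h
    rcases h with ⟨h1, -⟩ | h1
    · exact ne01 h1
    · exact ne02 h1
  -- d2 : eL1 ≠ s(a1,b1)
  · simp [eL1, vv, Sym2.eq_iff]
  -- d3 : eL2 ≠ s(b1,b2)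
  · intro h
    rw [eL2, Sym2.eq_iff] at h
    simp only [vv, Prod.mk.injEq, eq_self_iff_true, true_and, and_true] at h
    rcases h with ⟨h1, -⟩ | h1
    · exact ne12.symm h1
    · exact hWL1 h1
  -- d4 : eL2 ≠ s(a2,b2)
  · simp [eL2, vv, Sym2.eq_iff]
  -- d5 : eR1 ≠ s(a1,a2)
  · intro h
    rw [eR1, Sym2.eq_iff] at h
    simp only [vv, Prod.mk.injEq, eq_self_iff_true, true_and, and_true] at h
    rcases h with ⟨h1, -⟩ | h1
    · exact ne12.symm h1
    · exact ne31 h1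
  -- d6 : eR1 ≠ s(a2,b2)
  · simp [eR1, vv, Sym2.eq_iff]
  -- d7 : eR2 ≠ s(b1,b2)
  · intro h
    rw [eR2, Sym2.eq_iff] at h
    simp only [vv, Prod.mk.injEq, eq_self_iff_true, true_and, and_true] at h
    rcases h with h1 | ⟨h1, -⟩
    · exact hWR2 h1
    · exact ne12 h1
  -- d8 : eR2 ≠ s(a1,b1)
  · simp [eR2, vv, Sym2.eq_iff]
  -- d9
  · simp [vv, Sym2.eq_iff]
  -- d10
  · simp [vv, Sym2.eq_iff]
  -- d11
  · simp [vv, Sym2.eq_iff]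
  -- d12
  · simp [vv, Sym2.eq_iff]
  -- dl
  · simp [eL1, eL2, vv, Sym2.eq_iff]
  -- dr
  · simp [eR1, eR2, vv, Sym2.eq_iff]

lemma eL1_mem (n J : ℕ) (hn : 1 ≤ n) (hJ : J < 2*n) : eL1 n J ∈ papillonEdges n n := by
  simp only [papillonEdges, Set.mem_setOf_eq]
  rcases Nat.eq_zero_or_pos J with rfl | hJ0
  · right; left
    have h0 : ((2*(n+n) : ℕ) : ZMod (2*(n+n))) = ((2*0 : ℕ) : ZMod (2*(n+n))) := by
      rw [ZMod.natCast_self]; norm_num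
    have h1 : ((1 : ℕ) : ZMod (2*(n+n))) = ((2*0+1 : ℕ) : ZMod (2*(n+n))) := by norm_num
    rw [eL1, pu, pu, h0, h1]; rfl
  · left
    exact ⟨2*J, by omega, by omega, by rw [eL1, pu, pu]; rfl⟩

lemma eR1_mem (n J : ℕ) (hn : 1 ≤ n) (hJ : J < 2*n) : eR1 n J ∈ papillonEdges n n := by
  simp only [papillonEdges, Set.mem_setOf_eq]
  by_cases hJ0 : J + 1 < 2*n
  · left
    refine ⟨2*J+2, by omega, by omega, ?_⟩
    rw [eR1, pu, pu, show 2*J+2+1 = 2*J+3 from by omega]; rfl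
  · right; left
    have h0 : ((2*(n+n) : ℕ) : ZMod (2*(n+n))) = ((2*J+2 : ℕ) : ZMod (2*(n+n))) :=
      congrArg _ (by omega)
    have h1 : ((1 : ℕ) : ZMod (2*(n+n))) = ((2*J+3 : ℕ) : ZMod (2*(n+n))) :=
      (castZMod_drop (by omega)).symm
    rw [eR1, pu, pu, h0, h1]; rfl

lemma eR2_mem (n J : ℕ) (hn : 1 ≤ n) (hJ : J < 2*n) : eR2 n J ∈ papillonEdges n n := by
  simp only [papillonEdges, Set.mem_setOf_eq, min_self]
  by_cases hc : J+1 = n ∨ J+1 = 2*n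
  · rw [eR2, if_pos hc]
    right; right; right; right; right; right
    rcases hc with hc | hc
    · have h1 : ((2*n-1 : ℕ) : ZMod (2*(n+n))) = ((2*J+1 : ℕ) : ZMod (2*(n+n))) :=
        congrArg _ (by omega)
      have h2 : ((2*(n+n)-1 : ℕ) : ZMod (2*(n+n))) = ((2*J+1+2*n : ℕ) : ZMod (2*(n+n))) :=
        congrArg _ (by omega)
      rw [pv, pv, h1, h2]; rfl
    · have h1 : ((2*n-1 : ℕ) : ZMod (2*(n+n))) = ((2*J+1+2*n : ℕ) : ZMod (2*(n+n))) := by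
        rw [castZMod_drop (show 2*n-1 + 2*(n+n) = 2*J+1+2*n from by omega)]
      have h2 : ((2*(n+n)-1 : ℕ) : ZMod (2*(n+n))) = ((2*J+1 : ℕ) : ZMod (2*(n+n))) :=
        congrArg _ (by omega)
      rw [pv, pv, h1, h2, Sym2.eq_swap]; rfl
  · rw [eR2, if_neg hc]
    right; right; right; right; left
    refine ⟨J+1, by omega, by omega, by omega, ?_⟩
    have h1 : ((2*(J+1)-1 : ℕ) : ZMod (2*(n+n))) = ((2*J+1 : ℕ) : ZMod (2*(n+n))) :=
      congrArg _ (by omega)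
    have h2 : ((2*(J+1)+2 : ℕ) : ZMod (2*(n+n))) = ((2*J+4 : ℕ) : ZMod (2*(n+n))) :=
      congrArg _ (by omega)
    rw [pv, pv, h1, h2]; rfl

lemma eL2_mem (n J : ℕ) (hn : 1 ≤ n) (hJ : J < 2*n) : eL2 n J ∈ papillonEdges n n := by
  simp only [papillonEdges, Set.mem_setOf_eq, min_self]
  by_cases hc : J = 0 ∨ J = n
  · rw [eL2, if_pos hc]
    right; right; right; right; right; left
    rcases hc with hc | hc
    · have h1 : ((2 : ℕ) : ZMod (2*(n+n))) = ((2*J+2 : ℕ) : ZMod (2*(n+n))) :=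
        congrArg _ (by omega)
      have h2 : ((2*n+2 : ℕ) : ZMod (2*(n+n))) = ((2*J+2+2*n : ℕ) : ZMod (2*(n+n))) :=
        congrArg _ (by omega)
      rw [pv, pv, h1, h2]; rfl
    · have h1 : ((2 : ℕ) : ZMod (2*(n+n))) = ((2*J+2+2*n : ℕ) : ZMod (2*(n+n))) := by
        rw [castZMod_drop (show 2 + 2*(n+n) = 2*J+2+2*n from by omega)]
      have h2 : ((2*n+2 : ℕ) : ZMod (2*(n+n))) = ((2*J+2 : ℕ) : ZMod (2*(n+n))) :=
        congrArg _ (by omega)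
      rw [pv, pv, h1, h2, Sym2.eq_swap]; rfl
  · rw [eL2, if_neg hc]
    right; right; right; right; left
    refine ⟨J, by omega, by omega, by omega, ?_⟩
    rw [pv, pv, Sym2.eq_swap]; rfl

lemma mem_edgeSet_papillon {n : ℕ} {e : Sym2 (PapVert (2*(n+n)))}
    (h1 : e ∈ papillonEdges n n) (h2 : ¬ e.IsDiag) : e ∈ (papillon n n).edgeSet := by
  rw [papillon, SimpleGraph.edgeSet_fromEdgeSet]
  exact ⟨h1, h2⟩

lemma papillon_sub {n : ℕ} {e : Sym2 (PapVert (2*(n+n)))}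
    (h : e ∈ (papillon n n).edgeSet) : e ∈ papillonEdges n n := by
  rw [papillon, SimpleGraph.edgeSet_fromEdgeSet] at h
  exact h.1

lemma Tverts_eq (n J : ℕ) : Tverts n (J+1) =
    {vv n false (2*J+1), vv n false (2*J+2), vv n true (2*J+1), vv n true (2*J+2)} := by
  simp only [Tverts, pu, pv, vv, show 2*(J+1) = 2*J+2 from by omega,
    show 2*J+2-1 = 2*J+1 from by omega]

lemma boundaryT_eq (n J : ℕ) (hn : 1 ≤ n) (hJ : J < 2*n) :
    boundaryT n (J+1) = {eL1 n J, eL2 n J, eR1 n J, eR2 n J} := by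
  have ne01 : ((2*J : ℕ) : ZMod (2*(n+n))) ≠ ((2*J+1 : ℕ) : ZMod (2*(n+n))) :=
    castZMod_ne (by omega) (by omega) (by omega)
  have ne02 : ((2*J : ℕ) : ZMod (2*(n+n))) ≠ ((2*J+2 : ℕ) : ZMod (2*(n+n))) :=
    castZMod_ne (by omega) (by omega) (by omega)
  have ne12 : ((2*J+1 : ℕ) : ZMod (2*(n+n))) ≠ ((2*J+2 : ℕ) : ZMod (2*(n+n))) :=
    castZMod_ne (by omega) (by omega) (by omega)
  have ne31 : ((2*J+3 : ℕ) : ZMod (2*(n+n))) ≠ ((2*J+1 : ℕ) : ZMod (2*(n+n))) :=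
    castZMod_ne (by omega) (by omega) (by omega)
  have ne32 : ((2*J+3 : ℕ) : ZMod (2*(n+n))) ≠ ((2*J+2 : ℕ) : ZMod (2*(n+n))) :=
    castZMod_ne (by omega) (by omega) (by omega)
  have hWL1 : ((if J = 0 ∨ J = n then 2*J+2+2*n else 2*J-1 : ℕ) : ZMod (2*(n+n)))
      ≠ ((2*J+1 : ℕ) : ZMod (2*(n+n))) := by
    split_ifs with h <;> exact castZMod_ne (by omega) (by omega) (by omega)
  have hWL2 : ((if J = 0 ∨ J = n then 2*J+2+2*n else 2*J-1 : ℕ) : ZMod (2*(n+n)))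
      ≠ ((2*J+2 : ℕ) : ZMod (2*(n+n))) := by
    split_ifs with h <;> exact castZMod_ne (by omega) (by omega) (by omega)
  have hWR1 : ((if J+1 = n ∨ J+1 = 2*n then 2*J+1+2*n else 2*J+4 : ℕ) : ZMod (2*(n+n)))
      ≠ ((2*J+1 : ℕ) : ZMod (2*(n+n))) := by
    split_ifs with h <;> exact castZMod_ne (by omega) (by omega) (by omega)
  have hWR2 : ((if J+1 = n ∨ J+1 = 2*n then 2*J+1+2*n else 2*J+4 : ℕ) : ZMod (2*(n+n)))
      ≠ ((2*J+2 : ℕ) : ZMod (2*(n+n))) := by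
    split_ifs with h <;> exact castZMod_ne (by omega) (by omega) (by omega)
  ext e
  simp only [boundaryT, Set.mem_setOf_eq]
  constructor
  · rintro ⟨heE, x, y, rfl, hx, hy⟩
    have hye : y ∈ s(x, y) := Sym2.mem_mk_right x y
    have he := papillon_sub heE
    rw [Tverts_eq] at hx hy
    simp only [Set.mem_insert_iff, Set.mem_singleton_iff] at hx ⊢
    rcases hx with rfl | rfl | rfl | rfl
    · rcases inc_a1 n J _ he (Sym2.mem_mk_left _ _) with h | h | h
      · tauto
      · exfalso; apply hy
        have : y ∈ Ea n J := h ▸ hye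
        rw [Ea, Sym2.mem_iff] at this
        rcases this with rfl | rfl <;> simp
      · exfalso; apply hy
        have : y ∈ Es1 n J := h ▸ hye
        rw [Es1, Sym2.mem_iff] at this
        rcases this with rfl | rfl <;> simp
    · rcases inc_a2 n J _ he (Sym2.mem_mk_left _ _) with h | h | h
      · tauto
      · exfalso; apply hy
        have : y ∈ Ea n J := h ▸ hye
        rw [Ea, Sym2.mem_iff] at this
        rcases this with rfl | rfl <;> simp
      · exfalso; apply hy
        have : y ∈ Es2 n J := h ▸ hye
        rw [Es2, Sym2.mem_iff] at this
        rcases this with rfl | rfl <;> simp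
    · rcases incident_v_odd n J hn hJ _ he (Sym2.mem_mk_left _ _) with h | h | h
      · exfalso; apply hy
        have : y ∈ Es1 n J := h ▸ hye
        rw [Es1, Sym2.mem_iff] at this
        rcases this with rfl | rfl <;> simp
      · exfalso; apply hy
        have : y ∈ Eb n J := h ▸ hye
        rw [Eb, Sym2.mem_iff] at this
        rcases this with rfl | rfl <;> simp
      · tauto
    · rcases incident_v_even n J hn hJ _ he (Sym2.mem_mk_left _ _) with h | h | h
      · exfalso; apply hy
        have : y ∈ Es2 n J := h ▸ hye
        rw [Es2, Sym2.mem_iff] at this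
        rcases this with rfl | rfl <;> simp
      · exfalso; apply hy
        have : y ∈ Eb n J := h ▸ hye
        rw [Eb, Sym2.mem_iff] at this
        rcases this with rfl | rfl <;> simp
      · tauto
  · intro he
    simp only [Set.mem_insert_iff, Set.mem_singleton_iff] at he
    rcases he with rfl | rfl | rfl | rfl
    · refine ⟨mem_edgeSet_papillon (eL1_mem n J hn hJ) ?_,
        vv n false (2*J+1), vv n false (2*J), by rw [eL1]; exact Sym2.eq_swap, ?_, ?_⟩
      · rw [eL1, Sym2.mk_isDiag_iff]
        simp only [vv, Prod.mk.injEq, true_and]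
        exact fun h => ne01 h
      · rw [Tverts_eq]; simp
      · rw [Tverts_eq]
        simp only [Set.mem_insert_iff, Set.mem_singleton_iff, vv, Prod.mk.injEq]
        push_neg
        refine ⟨fun _ => ne01, fun _ => ne02, by simp, by simp⟩
    · refine ⟨mem_edgeSet_papillon (eL2_mem n J hn hJ) ?_,
        vv n true (2*J+2), vv n true (if J = 0 ∨ J = n then 2*J+2+2*n else 2*J-1),
        rfl, ?_, ?_⟩
      · rw [eL2, Sym2.mk_isDiag_iff]
        simp only [vv, Prod.mk.injEq, true_and]
        exact fun h => hWL2 h.symm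
      · rw [Tverts_eq]; simp
      · rw [Tverts_eq]
        simp only [Set.mem_insert_iff, Set.mem_singleton_iff, vv, Prod.mk.injEq]
        push_neg
        refine ⟨by simp, by simp, fun _ => hWL1, fun _ => hWL2⟩
    · refine ⟨mem_edgeSet_papillon (eR1_mem n J hn hJ) ?_,
        vv n false (2*J+2), vv n false (2*J+3), rfl, ?_, ?_⟩
      · rw [eR1, Sym2.mk_isDiag_iff]
        simp only [vv, Prod.mk.injEq, true_and]
        exact fun h => ne32 h.symm
      · rw [Tverts_eq]; simp
      · rw [Tverts_eq]
        simp only [Set.mem_insert_iff, Set.mem_singleton_iff, vv, Prod.mk.injEq]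
        push_neg
        refine ⟨fun _ => ne31, fun _ => ne32, by simp, by simp⟩
    · refine ⟨mem_edgeSet_papillon (eR2_mem n J hn hJ) ?_,
        vv n true (2*J+1), vv n true (if J+1 = n ∨ J+1 = 2*n then 2*J+1+2*n else 2*J+4),
        rfl, ?_, ?_⟩
      · rw [eR2, Sym2.mk_isDiag_iff]
        simp only [vv, Prod.mk.injEq, true_and]
        exact fun h => hWR1 h.symm
      · rw [Tverts_eq]; simp
      · rw [Tverts_eq]
        simp only [Set.mem_insert_iff, Set.mem_singleton_iff, vv, Prod.mk.injEq]
        push_neg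
        refine ⟨by simp, by simp, fun _ => hWR1, fun _ => hWR2⟩

lemma four_split {α : Type*} (M : Set α) (e1 e2 e3 e4 : α)
    (h13 : e1 ≠ e3) (h14 : e1 ≠ e4) (h23 : e2 ≠ e3) (h24 : e2 ≠ e4) :
    (M ∩ {e1, e2, e3, e4}).ncard = (M ∩ {e1, e2}).ncard + (M ∩ {e3, e4}).ncard := by
  have hu : ({e1, e2, e3, e4} : Set α) = {e1, e2} ∪ {e3, e4} := by
    ext x
    simp only [Set.mem_insert_iff, Set.mem_singleton_iff, Set.mem_union]
    tauto
  rw [hu, Set.inter_union_distrib_left]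
  apply Set.ncard_union_eq
  · rw [Set.disjoint_left]
    rintro x ⟨-, hx⟩ ⟨-, hx'⟩
    simp only [Set.mem_insert_iff, Set.mem_singleton_iff] at hx hx'
    rcases hx with rfl | rfl <;> rcases hx' with h | h <;> tauto
  · exact ((Set.finite_singleton _).insert _).inter_of_right M
  · exact ((Set.finite_singleton _).insert _).inter_of_right M

lemma chain_eq (n K : ℕ) (hn : 1 ≤ n) (h1 : K + 1 < 2*n) (h2 : K + 1 ≠ n) :
    ({eR1 n K, eR2 n K} : Set (Sym2 (PapVert (2*(n+n))))) = {eL1 n (K+1), eL2 n (K+1)} := by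
  have hL1 : eL1 n (K+1) = eR1 n K := by
    rw [eL1, eR1]
    simp only [vv, show 2*(K+1) = 2*K+2 from by omega, show 2*K+2+1 = 2*K+3 from by omega]
  have hL2 : eL2 n (K+1) = eR2 n K := by
    rw [eL2, eR2, if_neg (show ¬(K+1 = 0 ∨ K+1 = n) from by omega),
      if_neg (show ¬(K+1 = n ∨ K+1 = 2*n) from by omega), Sym2.eq_swap]
    simp only [vv, show 2*(K+1)+2 = 2*K+4 from by omega, show 2*(K+1)-1 = 2*K+1 from by omega]
  rw [hL1, hL2]

lemma Xcut_eq1 (n : ℕ) (hn : 1 ≤ n) :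
    Xcut n = {eL1 n 0, eL2 n 0, eR1 n (n-1), eR2 n (n-1)} := by
  have ha : s(pu (2*(n+n)) 1, pu (2*(n+n)) (4*n)) = eL1 n 0 := by
    rw [eL1, pu, pu, vv, vv,
      castZMod_drop (show (2*0 : ℕ) + 2*(n+n) = 4*n from by omega),
      show ((1 : ℕ) : ZMod (2*(n+n))) = ((2*0+1 : ℕ) : ZMod (2*(n+n))) from congrArg _ (by omega),
      Sym2.eq_swap]
  have hb : s(pv (2*(n+n)) (2*n-1), pv (2*(n+n)) (4*n-1)) = eR2 n (n-1) := by
    rw [eR2, if_pos (Or.inl (show (n-1)+1 = n from by omega)), pv, pv, vv, vv,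
      show ((2*n-1 : ℕ) : ZMod (2*(n+n))) = ((2*(n-1)+1 : ℕ) : ZMod (2*(n+n))) from
        congrArg _ (by omega),
      show ((4*n-1 : ℕ) : ZMod (2*(n+n))) = ((2*(n-1)+1+2*n : ℕ) : ZMod (2*(n+n))) from
        congrArg _ (by omega)]
  have hc : s(pv (2*(n+n)) 2, pv (2*(n+n)) (2*n+2)) = eL2 n 0 := by
    rw [eL2, if_pos (Or.inl rfl), pv, pv, vv, vv,
      show ((2 : ℕ) : ZMod (2*(n+n))) = ((2*0+2 : ℕ) : ZMod (2*(n+n))) from congrArg _ (by omega),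
      show ((2*n+2 : ℕ) : ZMod (2*(n+n))) = ((2*0+2+2*n : ℕ) : ZMod (2*(n+n))) from
        congrArg _ (by omega)]
  have hd : s(pu (2*(n+n)) (2*n), pu (2*(n+n)) (2*n+1)) = eR1 n (n-1) := by
    rw [eR1, pu, pu, vv, vv,
      show ((2*n : ℕ) : ZMod (2*(n+n))) = ((2*(n-1)+2 : ℕ) : ZMod (2*(n+n))) from
        congrArg _ (by omega),
      show ((2*n+1 : ℕ) : ZMod (2*(n+n))) = ((2*(n-1)+3 : ℕ) : ZMod (2*(n+n))) from
        congrArg _ (by omega)]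
  rw [Xcut, ha, hb, hc, hd]
  ext x
  simp only [Set.mem_insert_iff, Set.mem_singleton_iff]
  tauto

lemma Xcut_eq2 (n : ℕ) (hn : 1 ≤ n) :
    Xcut n = {eL1 n n, eL2 n n, eR1 n (2*n-1), eR2 n (2*n-1)} := by
  have ha : s(pu (2*(n+n)) 1, pu (2*(n+n)) (4*n)) = eR1 n (2*n-1) := by
    rw [eR1, pu, pu, vv, vv,
      show ((4*n : ℕ) : ZMod (2*(n+n))) = ((2*(2*n-1)+2 : ℕ) : ZMod (2*(n+n))) from
        congrArg _ (by omega),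
      show ((1 : ℕ) : ZMod (2*(n+n))) = ((2*(2*n-1)+3 : ℕ) : ZMod (2*(n+n))) from
        (castZMod_drop (by omega)).symm,
      Sym2.eq_swap]
  have hb : s(pv (2*(n+n)) (2*n-1), pv (2*(n+n)) (4*n-1)) = eR2 n (2*n-1) := by
    rw [eR2, if_pos (Or.inr (show (2*n-1)+1 = 2*n from by omega)), pv, pv, vv, vv,
      show ((2*n-1 : ℕ) : ZMod (2*(n+n))) = ((2*(2*n-1)+1+2*n : ℕ) : ZMod (2*(n+n))) from
        (castZMod_drop (by omega)).symm,
      show ((4*n-1 : ℕ) : ZMod (2*(n+n))) = ((2*(2*n-1)+1 : ℕ) : ZMod (2*(n+n))) from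
        congrArg _ (by omega),
      Sym2.eq_swap]
  have hc : s(pv (2*(n+n)) 2, pv (2*(n+n)) (2*n+2)) = eL2 n n := by
    rw [eL2, if_pos (Or.inr rfl), pv, pv, vv, vv,
      show ((2 : ℕ) : ZMod (2*(n+n))) = ((2*n+2+2*n : ℕ) : ZMod (2*(n+n))) from
        (castZMod_drop (by omega)).symm,
      show ((2*n+2 : ℕ) : ZMod (2*(n+n))) = ((2*n+2 : ℕ) : ZMod (2*(n+n))) from rfl,
      Sym2.eq_swap]
  have hd : s(pu (2*(n+n)) (2*n), pu (2*(n+n)) (2*n+1)) = eL1 n n := by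
    rw [eL1, pu, pu, vv, vv]
  rw [Xcut, ha, hb, hc, hd]
  ext x
  simp only [Set.mem_insert_iff, Set.mem_singleton_iff]
  tauto

lemma cross_ne (n K : ℕ) (hn : 1 ≤ n) (hK : K < 2*n) :
    eL1 n K ≠ eR1 n K ∧ eL1 n K ≠ eR2 n K ∧ eL2 n K ≠ eR1 n K ∧ eL2 n K ≠ eR2 n K := by
  have ne02 : ((2*K : ℕ) : ZMod (2*(n+n))) ≠ ((2*K+2 : ℕ) : ZMod (2*(n+n))) :=
    castZMod_ne (by omega) (by omega) (by omega)
  have ne03 : ((2*K : ℕ) : ZMod (2*(n+n))) ≠ ((2*K+3 : ℕ) : ZMod (2*(n+n))) :=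
    castZMod_ne (by omega) (by omega) (by omega)
  have ne21 : ((2*K+2 : ℕ) : ZMod (2*(n+n))) ≠ ((2*K+1 : ℕ) : ZMod (2*(n+n))) :=
    castZMod_ne (by omega) (by omega) (by omega)
  have hWR : ((2*K+2 : ℕ) : ZMod (2*(n+n)))
      ≠ ((if K+1 = n ∨ K+1 = 2*n then 2*K+1+2*n else 2*K+4 : ℕ) : ZMod (2*(n+n))) := by
    split_ifs with h <;> exact castZMod_ne (by omega) (by omega) (by omega)
  refine ⟨?_, ?_, ?_, ?_⟩
  · intro h
    rw [eL1, eR1, Sym2.eq_iff] at h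
    simp only [vv, Prod.mk.injEq, eq_self_iff_true, true_and, and_true] at h
    rcases h with ⟨h1, -⟩ | ⟨h1, -⟩
    · exact ne02 h1
    · exact ne03 h1
  · intro h
    rw [eL1, eR2, Sym2.eq_iff] at h
    simp only [vv, Prod.mk.injEq, eq_self_iff_true, true_and, and_true] at h
    tauto
  · intro h
    rw [eL2, eR1, Sym2.eq_iff] at h
    simp only [vv, Prod.mk.injEq, eq_self_iff_true, true_and, and_true] at h
    tauto
  · intro h
    rw [eL2, eR2, Sym2.eq_iff] at h
    simp only [vv, Prod.mk.injEq, eq_self_iff_true, true_and, and_true] at h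
    rcases h with ⟨h1, -⟩ | ⟨h1, -⟩
    · exact ne21 h1
    · exact hWR h1

lemma x_ne1 (n : ℕ) (hn : 1 ≤ n) :
    eL1 n 0 ≠ eR1 n (n-1) ∧ eL1 n 0 ≠ eR2 n (n-1) ∧ eL2 n 0 ≠ eR1 n (n-1)
      ∧ eL2 n 0 ≠ eR2 n (n-1) := by
  have h1 : ((2*0 : ℕ) : ZMod (2*(n+n))) ≠ ((2*(n-1)+2 : ℕ) : ZMod (2*(n+n))) :=
    castZMod_ne (by omega) (by omega) (by omega)
  have h2 : ((2*0 : ℕ) : ZMod (2*(n+n))) ≠ ((2*(n-1)+3 : ℕ) : ZMod (2*(n+n))) :=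
    castZMod_ne (by omega) (by omega) (by omega)
  have h3 : ((2*0+2 : ℕ) : ZMod (2*(n+n))) ≠ ((2*(n-1)+1 : ℕ) : ZMod (2*(n+n))) :=
    castZMod_ne (by omega) (by omega) (by omega)
  have h4 : ((2*0+2 : ℕ) : ZMod (2*(n+n))) ≠ ((2*(n-1)+1+2*n : ℕ) : ZMod (2*(n+n))) :=
    castZMod_ne (by omega) (by omega) (by omega)
  refine ⟨?_, ?_, ?_, ?_⟩
  · intro h
    rw [eL1, eR1, Sym2.eq_iff] at h
    simp only [vv, Prod.mk.injEq, eq_self_iff_true, true_and, and_true] at h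
    rcases h with ⟨ha, -⟩ | ⟨ha, -⟩
    · exact h1 ha
    · exact h2 ha
  · intro h
    rw [eL1, eR2, Sym2.eq_iff] at h
    simp only [vv, Prod.mk.injEq, eq_self_iff_true, true_and, and_true] at h
    tauto
  · intro h
    rw [eL2, eR1, Sym2.eq_iff] at h
    simp only [vv, Prod.mk.injEq, eq_self_iff_true, true_and, and_true] at h
    tauto
  · intro h
    rw [eL2, eR2, if_pos (Or.inl rfl),
      if_pos (Or.inl (show (n-1)+1 = n from by omega)), Sym2.eq_iff] at h
    simp only [vv, Prod.mk.injEq, eq_self_iff_true, true_and, and_true] at h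
    rcases h with ⟨ha, -⟩ | ⟨ha, -⟩
    · exact h3 ha
    · exact h4 ha

lemma x_ne2 (n : ℕ) (hn : 1 ≤ n) :
    eL1 n n ≠ eR1 n (2*n-1) ∧ eL1 n n ≠ eR2 n (2*n-1) ∧ eL2 n n ≠ eR1 n (2*n-1)
      ∧ eL2 n n ≠ eR2 n (2*n-1) := by
  have h1 : ((2*n : ℕ) : ZMod (2*(n+n))) ≠ ((2*(2*n-1)+2 : ℕ) : ZMod (2*(n+n))) :=
    castZMod_ne (by omega) (by omega) (by omega)
  have h2 : ((2*n : ℕ) : ZMod (2*(n+n))) ≠ ((2*(2*n-1)+3 : ℕ) : ZMod (2*(n+n))) :=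
    castZMod_ne (by omega) (by omega) (by omega)
  have h3 : ((2*n+2 : ℕ) : ZMod (2*(n+n))) ≠ ((2*(2*n-1)+1 : ℕ) : ZMod (2*(n+n))) :=
    castZMod_ne (by omega) (by omega) (by omega)
  have h4 : ((2*n+2 : ℕ) : ZMod (2*(n+n))) ≠ ((2*(2*n-1)+1+2*n : ℕ) : ZMod (2*(n+n))) :=
    castZMod_ne (by omega) (by omega) (by omega)
  refine ⟨?_, ?_, ?_, ?_⟩
  · intro h
    rw [eL1, eR1, Sym2.eq_iff] at h
    simp only [vv, Prod.mk.injEq, eq_self_iff_true, true_and, and_true] at h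
    rcases h with ⟨ha, -⟩ | ⟨ha, -⟩
    · exact h1 ha
    · exact h2 ha
  · intro h
    rw [eL1, eR2, Sym2.eq_iff] at h
    simp only [vv, Prod.mk.injEq, eq_self_iff_true, true_and, and_true] at h
    tauto
  · intro h
    rw [eL2, eR1, Sym2.eq_iff] at h
    simp only [vv, Prod.mk.injEq, eq_self_iff_true, true_and, and_true] at h
    tauto
  · intro h
    rw [eL2, eR2, if_pos (Or.inr rfl),
      if_pos (Or.inr (show (2*n-1)+1 = 2*n from by omega)), Sym2.eq_iff] at h
    simp only [vv, Prod.mk.injEq, eq_self_iff_true, true_and, and_true] at h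
    rcases h with ⟨ha, -⟩ | ⟨ha, -⟩
    · exact h3 ha
    · exact h4 ha


/-- For every perfect matching `M` of the balanced papillon graph `P_n` and every
`j ∈ {1, …, 2n}`, `|M ∩ ∂T_j| = |M ∩ X|`, where `X` is the principal 4-edge-cut. -/
theorem statement9 (n : ℕ) (hn : 1 ≤ n) (M : Set (Sym2 (PapVert (2 * (n + n)))))
    (hM : IsPerfMatching (papillon n n) M) (j : ℕ) (hj1 : 1 ≤ j) (hj2 : j ≤ 2 * n) :
    (M ∩ boundaryT n j).ncard = (M ∩ Xcut n).ncard := by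
  obtain ⟨J, rfl⟩ : ∃ J, j = J + 1 := ⟨j - 1, by omega⟩
  have hJ : J < 2*n := by omega
  have hsub : M ⊆ papillonEdges n n := fun e he => papillon_sub (hM.1 he)
  have hlr : ∀ K, K < 2*n →
      (M ∩ {eL1 n K, eL2 n K}).ncard = (M ∩ {eR1 n K, eR2 n K}).ncard :=
    fun K hK => block_eq n K hn hK M hsub hM.2
  have hch : ∀ K, K + 1 < 2*n → K + 1 ≠ n →
      (M ∩ {eR1 n K, eR2 n K}).ncard = (M ∩ {eR1 n (K+1), eR2 n (K+1)}).ncard := by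
    intro K h1 h2
    rw [chain_eq n K hn h1 h2]
    exact hlr (K+1) (by omega)
  have hconst : ∀ k K, K + k < 2*n → (K + k < n ∨ n ≤ K) →
      (M ∩ {eR1 n K, eR2 n K}).ncard = (M ∩ {eR1 n (K+k), eR2 n (K+k)}).ncard := by
    intro k
    induction k with
    | zero => intro K h1 h2; rfl
    | succ k ih =>
      intro K h1 h2
      have e1 := ih K (by omega) (by omega)
      have e2 := hch (K+k) (by omega) (by omega)
      rw [show K + (k+1) = K + k + 1 from by omega]
      omega
  have hbcount : (M ∩ boundaryT n (J+1)).ncard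
      = (M ∩ {eL1 n J, eL2 n J}).ncard + (M ∩ {eR1 n J, eR2 n J}).ncard := by
    rw [boundaryT_eq n J hn hJ]
    obtain ⟨c1, c2, c3, c4⟩ := cross_ne n J hn hJ
    exact four_split M _ _ _ _ c1 c2 c3 c4
  rcases lt_or_ge J n with hJn | hJn
  · have hX : (M ∩ Xcut n).ncard
        = (M ∩ {eR1 n 0, eR2 n 0}).ncard + (M ∩ {eR1 n (n-1), eR2 n (n-1)}).ncard := by
      rw [Xcut_eq1 n hn]
      obtain ⟨c1, c2, c3, c4⟩ := x_ne1 n hn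
      rw [four_split M _ _ _ _ c1 c2 c3 c4, hlr 0 (by omega)]
    have h1 : (M ∩ {eR1 n 0, eR2 n 0}).ncard = (M ∩ {eR1 n (n-1), eR2 n (n-1)}).ncard := by
      have := hconst (n-1) 0 (by omega) (by omega)
      rwa [show 0 + (n-1) = n-1 from by omega] at this
    have h2 : (M ∩ {eR1 n J, eR2 n J}).ncard = (M ∩ {eR1 n (n-1), eR2 n (n-1)}).ncard := by
      have := hconst (n-1-J) J (by omega) (by omega)
      rwa [show J + (n-1-J) = n-1 from by omega] at this
    rw [hbcount, hlr J hJ]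
    omega
  · have hX : (M ∩ Xcut n).ncard
        = (M ∩ {eR1 n n, eR2 n n}).ncard + (M ∩ {eR1 n (2*n-1), eR2 n (2*n-1)}).ncard := by
      rw [Xcut_eq2 n hn]
      obtain ⟨c1, c2, c3, c4⟩ := x_ne2 n hn
      rw [four_split M _ _ _ _ c1 c2 c3 c4, hlr n (by omega)]
    have h1 : (M ∩ {eR1 n n, eR2 n n}).ncard = (M ∩ {eR1 n (2*n-1), eR2 n (2*n-1)}).ncard := by
      have := hconst (n-1) n (by omega) (by omega)
      rwa [show n + (n-1) = 2*n-1 from by omega] at this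
    have h2 : (M ∩ {eR1 n J, eR2 n J}).ncard
        = (M ∩ {eR1 n (2*n-1), eR2 n (2*n-1)}).ncard := by
      have := hconst (2*n-1-J) J (by omega) (by omega)
      rwa [show J + (2*n-1-J) = 2*n-1 from by omega] at this
    rw [hbcount, hlr J hJ]
    omega
end

section
/- Let n be a positive integer, let M be a perfect matching of the balanced papillon graph P_n, and let X = {a, b, c, d} be its principal 4-edge-cut. If |M ∩ X| = 2, then M ∩ X = {a, d} or M ∩ X = {b, c}. -/
open SimpleGraph


namespace PapAux

lemma cast_eq_cases {N x y : ℕ} (h : (x : ZMod N) = (y : ZMod N)) (hN : 0 < N)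
    (hx : x < 2*N) (hy : y < 2*N) : x = y ∨ x = y + N ∨ y = x + N := by
  have h' : x % N = y % N := (ZMod.natCast_eq_natCast_iff x y N).mp h
  have ex : x % N = x ∨ (x % N = x - N ∧ N ≤ x) := by
    rcases Nat.lt_or_ge x N with h1 | h1
    · exact Or.inl (Nat.mod_eq_of_lt h1)
    · exact Or.inr ⟨by rw [Nat.mod_eq_sub_mod h1, Nat.mod_eq_of_lt (by omega)], h1⟩
  have ey : y % N = y ∨ (y % N = y - N ∧ N ≤ y) := by
    rcases Nat.lt_or_ge y N with h1 | h1
    · exact Or.inl (Nat.mod_eq_of_lt h1)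
    · exact Or.inr ⟨by rw [Nat.mod_eq_sub_mod h1, Nat.mod_eq_of_lt (by omega)], h1⟩
  rcases ex with e1 | ⟨e1, hxe⟩ <;> rcases ey with e2 | ⟨e2, hye⟩ <;> rw [e1, e2] at h' <;> omega

variable (n : ℕ)

def aE : Sym2 (PapVert (2*(n+n))) := s(pu (2*(n+n)) 1, pu (2*(n+n)) (4*n))
def bE : Sym2 (PapVert (2*(n+n))) := s(pv (2*(n+n)) (2*n-1), pv (2*(n+n)) (4*n-1))
def cE : Sym2 (PapVert (2*(n+n))) := s(pv (2*(n+n)) 2, pv (2*(n+n)) (2*n+2))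
def dE : Sym2 (PapVert (2*(n+n))) := s(pu (2*(n+n)) (2*n), pu (2*(n+n)) (2*n+1))

def lolE (j : ℕ) : Sym2 (PapVert (2*(n+n))) := s(pu (2*(n+n)) (2*j-2), pu (2*(n+n)) (2*j-1))
def uuE (j : ℕ) : Sym2 (PapVert (2*(n+n))) := s(pu (2*(n+n)) (2*j-1), pu (2*(n+n)) (2*j))
def rolE (j : ℕ) : Sym2 (PapVert (2*(n+n))) := s(pu (2*(n+n)) (2*j), pu (2*(n+n)) (2*j+1))
def sp1E (j : ℕ) : Sym2 (PapVert (2*(n+n))) := s(pu (2*(n+n)) (2*j-1), pv (2*(n+n)) (2*j-1))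
def sp2E (j : ℕ) : Sym2 (PapVert (2*(n+n))) := s(pu (2*(n+n)) (2*j), pv (2*(n+n)) (2*j))
def vvE (j : ℕ) : Sym2 (PapVert (2*(n+n))) := s(pv (2*(n+n)) (2*j-1), pv (2*(n+n)) (2*j))
def lilE (j : ℕ) : Sym2 (PapVert (2*(n+n))) :=
  if j = 1 ∨ j = n+1 then cE n else s(pv (2*(n+n)) (2*j-3), pv (2*(n+n)) (2*j))
def rilE (j : ℕ) : Sym2 (PapVert (2*(n+n))) :=
  if j = n ∨ j = 2*n then bE n else s(pv (2*(n+n)) (2*j-1), pv (2*(n+n)) (2*j+2))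

lemma incidence_outer (hn : 1 ≤ n) {e : Sym2 (PapVert (2*(n+n)))} (he : e ∈ papillonEdges n n)
    {z : ZMod (2*(n+n))} (hz : ((false, z) : PapVert (2*(n+n))) ∈ e) :
    e = s(((false, z-1) : PapVert (2*(n+n))), (false, z)) ∨
    e = s(((false, z) : PapVert (2*(n+n))), (false, z+1)) ∨
    e = s(((false, z) : PapVert (2*(n+n))), (true, z)) := by
  rw [papillonEdges, Set.mem_setOf_eq] at he
  rcases he with ⟨i, hi1, hi2, rfl⟩ | rfl | ⟨i, hi1, hi2, rfl⟩ | ⟨i, hi1, hi2, rfl⟩ |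
    ⟨i, hi1, hi2, hi3, rfl⟩ | rfl | rfl
  · simp only [pu, Sym2.mem_iff, Prod.mk.injEq, true_and] at hz
    rcases hz with h | h
    · right; left
      subst h
      simp [pu, Nat.cast_add, Nat.cast_one]
    · left
      subst h
      simp [pu, Nat.cast_add, Nat.cast_one]
  · simp only [pu, Sym2.mem_iff, Prod.mk.injEq, true_and, ZMod.natCast_self] at hz
    rcases hz with h | h
    · right; left
      subst h
      simp [pu, ZMod.natCast_self]
    · left
      subst h
      simp [pu, ZMod.natCast_self, Nat.cast_one]
  · simp only [pu, pv, Sym2.mem_iff, Prod.mk.injEq, true_and, false_and, or_false,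
      Bool.false_eq_true, and_false, false_or] at hz
    right; right
    rw [pu, pv, ← hz]
  · exfalso; simp [pu, pv, Sym2.mem_iff, Prod.mk.injEq] at hz
  · exfalso; simp [pu, pv, Sym2.mem_iff, Prod.mk.injEq] at hz
  · exfalso; simp [pu, pv, Sym2.mem_iff, Prod.mk.injEq] at hz
  · exfalso; simp [pu, pv, Sym2.mem_iff, Prod.mk.injEq] at hz

lemma incidence_odd (hn : 1 ≤ n) (j : ℕ) (hj1 : 1 ≤ j) (hj2 : j ≤ 2*n)
    {e : Sym2 (PapVert (2*(n+n)))} (he : e ∈ papillonEdges n n)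
    (hz : pv (2*(n+n)) (2*j-1) ∈ e) :
    e = sp1E n j ∨ e = vvE n j ∨ e = rilE n j := by
  rw [papillonEdges, Set.mem_setOf_eq] at he
  simp only [Nat.min_self] at he
  rcases he with ⟨i, hi1, hi2, rfl⟩ | rfl | ⟨i, hi1, hi2, rfl⟩ | ⟨i, hi1, hi2, rfl⟩ |
    ⟨i, hi1, hi2, hi3, rfl⟩ | rfl | rfl
  · exfalso; simp [pu, pv, Sym2.mem_iff, Prod.mk.injEq] at hz
  · exfalso; simp [pu, pv, Sym2.mem_iff, Prod.mk.injEq] at hz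
  · -- spoke
    simp only [pu, pv, Sym2.mem_iff, Prod.mk.injEq, true_and, Bool.true_eq_false, false_and,
      false_or] at hz
    left
    rw [sp1E]; simp only [pu, pv]; rw [hz]
  · -- pair edge
    simp only [pv, Sym2.mem_iff, Prod.mk.injEq, true_and] at hz
    rcases hz with h | h
    · have hij : i = j := by
        rcases cast_eq_cases h (by omega) (by omega) (by omega) with h' | h' | h' <;> omega
      subst hij
      right; left; rw [vvE]
    · exfalso
      rcases cast_eq_cases h (by omega) (by omega) (by omega) with h' | h' | h' <;> omega
  · -- skip edge
    simp only [pv, Sym2.mem_iff, Prod.mk.injEq, true_and] at hz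
    rcases hz with h | h
    · have hij : i = j := by
        rcases cast_eq_cases h (by omega) (by omega) (by omega) with h' | h' | h' <;> omega
      subst hij
      right; right
      rw [rilE, if_neg (by omega)]
    · exfalso
      rcases cast_eq_cases h (by omega) (by omega) (by omega) with h' | h' | h' <;> omega
  · -- c edge
    exfalso
    simp only [pv, Sym2.mem_iff, Prod.mk.injEq, true_and] at hz
    rcases hz with h | h <;>
      rcases cast_eq_cases h (by omega) (by omega) (by omega) with h' | h' | h' <;> omega
  · -- b edge
    simp only [pv, Sym2.mem_iff, Prod.mk.injEq, true_and] at hz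
    right; right
    rcases hz with h | h
    · have hj : j = n := by
        rcases cast_eq_cases h (by omega) (by omega) (by omega) with h' | h' | h' <;> omega
      rw [hj, rilE, if_pos (Or.inl rfl), bE, show 2*(n+n)-1 = 4*n-1 from by omega]
    · have hj : j = 2*n := by
        rcases cast_eq_cases h (by omega) (by omega) (by omega) with h' | h' | h' <;> omega
      rw [hj, rilE, if_pos (Or.inr rfl), bE, show 2*(n+n)-1 = 4*n-1 from by omega]

lemma incidence_even (hn : 1 ≤ n) (j : ℕ) (hj1 : 1 ≤ j) (hj2 : j ≤ 2*n)
    {e : Sym2 (PapVert (2*(n+n)))} (he : e ∈ papillonEdges n n)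
    (hz : pv (2*(n+n)) (2*j) ∈ e) :
    e = sp2E n j ∨ e = vvE n j ∨ e = lilE n j := by
  rw [papillonEdges, Set.mem_setOf_eq] at he
  simp only [Nat.min_self] at he
  rcases he with ⟨i, hi1, hi2, rfl⟩ | rfl | ⟨i, hi1, hi2, rfl⟩ | ⟨i, hi1, hi2, rfl⟩ |
    ⟨i, hi1, hi2, hi3, rfl⟩ | rfl | rfl
  · exfalso; simp [pu, pv, Sym2.mem_iff, Prod.mk.injEq] at hz
  · exfalso; simp [pu, pv, Sym2.mem_iff, Prod.mk.injEq] at hz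
  · simp only [pu, pv, Sym2.mem_iff, Prod.mk.injEq, true_and, Bool.true_eq_false, false_and,
      false_or] at hz
    left
    rw [sp2E]; simp only [pu, pv]; rw [hz]
  · -- pair edge
    simp only [pv, Sym2.mem_iff, Prod.mk.injEq, true_and] at hz
    rcases hz with h | h
    · exfalso
      rcases cast_eq_cases h (by omega) (by omega) (by omega) with h' | h' | h' <;> omega
    · have hij : i = j := by
        rcases cast_eq_cases h (by omega) (by omega) (by omega) with h' | h' | h' <;> omega
      subst hij
      right; left; rw [vvE]
  · -- skip edge
    simp only [pv, Sym2.mem_iff, Prod.mk.injEq, true_and] at hz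
    rcases hz with h | h
    · exfalso
      rcases cast_eq_cases h (by omega) (by omega) (by omega) with h' | h' | h' <;> omega
    · have hij : j = i + 1 := by
        rcases cast_eq_cases h (by omega) (by omega) (by omega) with h' | h' | h' <;> omega
      subst hij
      right; right
      rw [lilE, if_neg (by omega), show 2*(i+1)-3 = 2*i-1 from by omega,
        show 2*(i+1) = 2*i+2 from by omega]
  · -- c edge
    simp only [pv, Sym2.mem_iff, Prod.mk.injEq, true_and] at hz
    right; right
    rcases hz with h | h
    · have hj : j = 1 := by
        rcases cast_eq_cases h (by omega) (by omega) (by omega) with h' | h' | h' <;> omega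
      rw [hj, lilE, if_pos (Or.inl rfl), cE]
    · have hj : j = n+1 := by
        rcases cast_eq_cases h (by omega) (by omega) (by omega) with h' | h' | h' <;> omega
      rw [hj, lilE, if_pos (Or.inr rfl), cE]
  · -- b edge
    exfalso
    simp only [pv, Sym2.mem_iff, Prod.mk.injEq, true_and] at hz
    rcases hz with h | h <;>
      rcases cast_eq_cases h (by omega) (by omega) (by omega) with h' | h' | h' <;> omega

lemma lol_ne_uu (hn : 1 ≤ n) (j : ℕ) (hj1 : 1 ≤ j) (hj2 : j ≤ 2*n) : lolE n j ≠ uuE n j := by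
  rw [lolE, uuE]
  intro hcon
  rw [Sym2.eq_iff] at hcon
  rcases hcon with ⟨ha, hb⟩ | ⟨ha, hb⟩ <;>
  · have h1 := congrArg Prod.snd ha
    simp only [pu, pv] at h1
    rcases cast_eq_cases (N := 2*(n+n)) h1 (by omega) (by omega) (by omega)
      with h' | h' | h' <;> omega

lemma rol_ne_uu (hn : 1 ≤ n) (j : ℕ) (hj1 : 1 ≤ j) (hj2 : j ≤ 2*n) : rolE n j ≠ uuE n j := by
  rw [rolE, uuE]
  intro hcon
  rw [Sym2.eq_iff] at hcon
  rcases hcon with ⟨ha, hb⟩ | ⟨ha, hb⟩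
  · have h1 := congrArg Prod.snd ha
    simp only [pu, pv] at h1
    rcases cast_eq_cases (N := 2*(n+n)) h1 (by omega) (by omega) (by omega)
      with h' | h' | h' <;> omega
  · have h1 := congrArg Prod.snd hb
    simp only [pu, pv] at h1
    rcases cast_eq_cases (N := 2*(n+n)) h1 (by omega) (by omega) (by omega)
      with h' | h' | h' <;> omega

lemma lol_ne_sp1 (j : ℕ) : lolE n j ≠ sp1E n j := by
  rw [lolE, sp1E]
  intro hcon
  rw [Sym2.eq_iff] at hcon
  simp [pu, pv, Prod.mk.injEq] at hcon

lemma uu_ne_sp1 (j : ℕ) : uuE n j ≠ sp1E n j := by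
  rw [uuE, sp1E]
  intro hcon
  rw [Sym2.eq_iff] at hcon
  simp [pu, pv, Prod.mk.injEq] at hcon

lemma uu_ne_sp2 (j : ℕ) : uuE n j ≠ sp2E n j := by
  rw [uuE, sp2E]
  intro hcon
  rw [Sym2.eq_iff] at hcon
  simp [pu, pv, Prod.mk.injEq] at hcon

lemma rol_ne_sp2 (j : ℕ) : rolE n j ≠ sp2E n j := by
  rw [rolE, sp2E]
  intro hcon
  rw [Sym2.eq_iff] at hcon
  simp [pu, pv, Prod.mk.injEq] at hcon

lemma sp1_ne_vv (j : ℕ) : sp1E n j ≠ vvE n j := by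
  rw [sp1E, vvE]
  intro hcon
  rw [Sym2.eq_iff] at hcon
  simp [pu, pv, Prod.mk.injEq] at hcon

lemma sp2_ne_vv (j : ℕ) : sp2E n j ≠ vvE n j := by
  rw [sp2E, vvE]
  intro hcon
  rw [Sym2.eq_iff] at hcon
  simp [pu, pv, Prod.mk.injEq] at hcon

lemma lil_ne_sp2 (j : ℕ) : lilE n j ≠ sp2E n j := by
  rw [lilE, sp2E]
  split_ifs with hc
  · rw [cE]
    intro hcon
    rw [Sym2.eq_iff] at hcon
    simp [pu, pv, Prod.mk.injEq] at hcon
  · intro hcon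
    rw [Sym2.eq_iff] at hcon
    simp [pu, pv, Prod.mk.injEq] at hcon

lemma ril_ne_sp1 (j : ℕ) : rilE n j ≠ sp1E n j := by
  rw [rilE, sp1E]
  split_ifs with hc
  · rw [bE]
    intro hcon
    rw [Sym2.eq_iff] at hcon
    simp [pu, pv, Prod.mk.injEq] at hcon
  · intro hcon
    rw [Sym2.eq_iff] at hcon
    simp [pu, pv, Prod.mk.injEq] at hcon

lemma vv_ne_lil (hn : 1 ≤ n) (j : ℕ) (hj1 : 1 ≤ j) (hj2 : j ≤ 2*n) : vvE n j ≠ lilE n j := by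
  rw [vvE, lilE]
  split_ifs with hc
  · rcases hc with h | h <;> rw [h] <;> rw [cE] <;>
    · intro hcon
      rw [Sym2.eq_iff] at hcon
      rcases hcon with ⟨ha, hb⟩ | ⟨ha, hb⟩ <;>
      · have h1 := congrArg Prod.snd ha
        have h2 := congrArg Prod.snd hb
        simp only [pu, pv] at h1 h2
        first
        | rcases cast_eq_cases (N := 2*(n+n)) h1 (by omega) (by omega) (by omega)
            with h' | h' | h' <;> omega
        | rcases cast_eq_cases (N := 2*(n+n)) h2 (by omega) (by omega) (by omega)
            with h' | h' | h' <;> omega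
  · intro hcon
    rw [Sym2.eq_iff] at hcon
    rcases hcon with ⟨ha, hb⟩ | ⟨ha, hb⟩ <;>
    · have h1 := congrArg Prod.snd ha
      have h2 := congrArg Prod.snd hb
      simp only [pu, pv] at h1 h2
      first
      | rcases cast_eq_cases (N := 2*(n+n)) h1 (by omega) (by omega) (by omega)
          with h' | h' | h' <;> omega
      | rcases cast_eq_cases (N := 2*(n+n)) h2 (by omega) (by omega) (by omega)
          with h' | h' | h' <;> omega

lemma vv_ne_ril (hn : 1 ≤ n) (j : ℕ) (hj1 : 1 ≤ j) (hj2 : j ≤ 2*n) : vvE n j ≠ rilE n j := by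
  rw [vvE, rilE]
  split_ifs with hc
  · rcases hc with h | h <;> rw [h] <;> rw [bE] <;>
    · intro hcon
      rw [Sym2.eq_iff] at hcon
      rcases hcon with ⟨ha, hb⟩ | ⟨ha, hb⟩ <;>
      · have h1 := congrArg Prod.snd ha
        have h2 := congrArg Prod.snd hb
        simp only [pu, pv] at h1 h2
        first
        | rcases cast_eq_cases (N := 2*(n+n)) h1 (by omega) (by omega) (by omega)
            with h' | h' | h' <;> omega
        | rcases cast_eq_cases (N := 2*(n+n)) h2 (by omega) (by omega) (by omega)
            with h' | h' | h' <;> omega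
  · intro hcon
    rw [Sym2.eq_iff] at hcon
    rcases hcon with ⟨ha, hb⟩ | ⟨ha, hb⟩ <;>
    · have h1 := congrArg Prod.snd ha
      have h2 := congrArg Prod.snd hb
      simp only [pu, pv] at h1 h2
      first
      | rcases cast_eq_cases (N := 2*(n+n)) h1 (by omega) (by omega) (by omega)
          with h' | h' | h' <;> omega
      | rcases cast_eq_cases (N := 2*(n+n)) h2 (by omega) (by omega) (by omega)
          with h' | h' | h' <;> omega

lemma mem_y2_lil (hn : 1 ≤ n) (j : ℕ) (hj1 : 1 ≤ j) (hj2 : j ≤ 2*n) :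
    pv (2*(n+n)) (2*j) ∈ lilE n j := by
  rw [lilE]
  split_ifs with hc
  · rcases hc with h | h
    · rw [h, cE, show (2*1 : ℕ) = 2 from rfl]
      exact Sym2.mem_mk_left _ _
    · rw [h, cE, show 2*(n+1) = 2*n+2 from by ring]
      exact Sym2.mem_mk_right _ _
  · exact Sym2.mem_mk_right _ _

lemma mem_y1_ril (hn : 1 ≤ n) (j : ℕ) (hj1 : 1 ≤ j) (hj2 : j ≤ 2*n) :
    pv (2*(n+n)) (2*j-1) ∈ rilE n j := by
  rw [rilE]
  split_ifs with hc
  · rcases hc with h | h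
    · rw [h, bE]
      exact Sym2.mem_mk_left _ _
    · rw [h, bE, show (4*n-1 : ℕ) = 2*(2*n)-1 from by omega]
      exact Sym2.mem_mk_right _ _
  · exact Sym2.mem_mk_left _ _

lemma block (hn : 1 ≤ n) {M : Set (Sym2 (PapVert (2*(n+n))))}
    (hsub : ∀ e ∈ M, e ∈ papillonEdges n n)
    (huniq : ∀ v : PapVert (2*(n+n)), ∃! e, e ∈ M ∧ v ∈ e)
    (j : ℕ) (hj1 : 1 ≤ j) (hj2 : j ≤ 2*n) :
    ((lolE n j ∈ M ∧ lilE n j ∈ M) ↔ (rolE n j ∈ M ∧ rilE n j ∈ M)) ∧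
    ((lolE n j ∈ M ∨ lilE n j ∈ M) ↔ (rolE n j ∈ M ∨ rilE n j ∈ M)) := by
  obtain ⟨e1, ⟨he1M, he1x⟩, hu1⟩ := huniq (pu (2*(n+n)) (2*j-1))
  obtain ⟨f1, ⟨hf1M, hf1x⟩, hu2⟩ := huniq (pu (2*(n+n)) (2*j))
  obtain ⟨e2, ⟨he2M, he2x⟩, hu3⟩ := huniq (pv (2*(n+n)) (2*j))
  obtain ⟨f2, ⟨hf2M, hf2x⟩, hu4⟩ := huniq (pv (2*(n+n)) (2*j-1))
  have key1 : ∀ g ∈ M, pu (2*(n+n)) (2*j-1) ∈ g → g = e1 := fun g hg hx => hu1 g ⟨hg, hx⟩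
  have key2 : ∀ g ∈ M, pu (2*(n+n)) (2*j) ∈ g → g = f1 := fun g hg hx => hu2 g ⟨hg, hx⟩
  have key3 : ∀ g ∈ M, pv (2*(n+n)) (2*j) ∈ g → g = e2 := fun g hg hx => hu3 g ⟨hg, hx⟩
  have key4 : ∀ g ∈ M, pv (2*(n+n)) (2*j-1) ∈ g → g = f2 := fun g hg hx => hu4 g ⟨hg, hx⟩
  -- cast identities
  have hz1 : ((2*j-2 : ℕ) : ZMod (2*(n+n))) = ((2*j-1 : ℕ) : ZMod (2*(n+n))) - 1 := by
    rw [eq_sub_iff_add_eq]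
    have h : (((2*j-2)+1 : ℕ) : ZMod (2*(n+n))) = ((2*j-2 : ℕ) : ZMod (2*(n+n))) + 1 := by
      push_cast; ring
    rw [← h]; congr 1; omega
  have hz2 : ((2*j : ℕ) : ZMod (2*(n+n))) = ((2*j-1 : ℕ) : ZMod (2*(n+n))) + 1 := by
    have h : (((2*j-1)+1 : ℕ) : ZMod (2*(n+n))) = ((2*j-1 : ℕ) : ZMod (2*(n+n))) + 1 := by
      push_cast; ring
    rw [← h]; congr 1; omega
  have hz3 : ((2*j-1 : ℕ) : ZMod (2*(n+n))) = ((2*j : ℕ) : ZMod (2*(n+n))) - 1 := by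
    rw [eq_sub_iff_add_eq]
    have h : (((2*j-1)+1 : ℕ) : ZMod (2*(n+n))) = ((2*j-1 : ℕ) : ZMod (2*(n+n))) + 1 := by
      push_cast; ring
    rw [← h]; congr 1; omega
  have hz4 : ((2*j+1 : ℕ) : ZMod (2*(n+n))) = ((2*j : ℕ) : ZMod (2*(n+n))) + 1 := by
    push_cast; ring
  -- candidates
  have hc1 : e1 = lolE n j ∨ e1 = uuE n j ∨ e1 = sp1E n j := by
    rcases incidence_outer n hn (hsub e1 he1M) he1x with h | h | h
    · left; rw [lolE]; simp only [pu]; rw [hz1]; exact h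
    · right; left; rw [uuE]; simp only [pu]; rw [hz2]; exact h
    · right; right; rw [sp1E]; simp only [pu, pv]; exact h
  have hc2 : f1 = uuE n j ∨ f1 = rolE n j ∨ f1 = sp2E n j := by
    rcases incidence_outer n hn (hsub f1 hf1M) hf1x with h | h | h
    · left; rw [uuE]; simp only [pu]; rw [hz3]; exact h
    · right; left; rw [rolE]; simp only [pu]; rw [hz4]; exact h
    · right; right; rw [sp2E]; simp only [pu, pv]; exact h
  have hc3 : e2 = sp2E n j ∨ e2 = vvE n j ∨ e2 = lilE n j :=
    incidence_even n hn j hj1 hj2 (hsub e2 he2M) he2x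
  have hc4 : f2 = sp1E n j ∨ f2 = vvE n j ∨ f2 = rilE n j :=
    incidence_odd n hn j hj1 hj2 (hsub f2 hf2M) hf2x
  -- memberships
  have mlol : pu (2*(n+n)) (2*j-1) ∈ lolE n j := by rw [lolE]; exact Sym2.mem_mk_right _ _
  have muu1 : pu (2*(n+n)) (2*j-1) ∈ uuE n j := by rw [uuE]; exact Sym2.mem_mk_left _ _
  have muu2 : pu (2*(n+n)) (2*j) ∈ uuE n j := by rw [uuE]; exact Sym2.mem_mk_right _ _
  have mrol : pu (2*(n+n)) (2*j) ∈ rolE n j := by rw [rolE]; exact Sym2.mem_mk_left _ _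
  have msp1a : pu (2*(n+n)) (2*j-1) ∈ sp1E n j := by rw [sp1E]; exact Sym2.mem_mk_left _ _
  have msp2a : pu (2*(n+n)) (2*j) ∈ sp2E n j := by rw [sp2E]; exact Sym2.mem_mk_left _ _
  have msp2b : pv (2*(n+n)) (2*j) ∈ sp2E n j := by rw [sp2E]; exact Sym2.mem_mk_right _ _
  have mvva : pv (2*(n+n)) (2*j-1) ∈ vvE n j := by rw [vvE]; exact Sym2.mem_mk_left _ _
  have mvvb : pv (2*(n+n)) (2*j) ∈ vvE n j := by rw [vvE]; exact Sym2.mem_mk_right _ _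
  have mlil : pv (2*(n+n)) (2*j) ∈ lilE n j := mem_y2_lil n hn j hj1 hj2
  have mril : pv (2*(n+n)) (2*j-1) ∈ rilE n j := mem_y1_ril n hn j hj1 hj2
  -- disequalities
  have n1 := lol_ne_uu n hn j hj1 hj2
  have n2 := lol_ne_sp1 n j
  have n3 := uu_ne_sp1 n j
  have n4 := uu_ne_sp2 n j
  have n5 := rol_ne_uu n hn j hj1 hj2
  have n6 := rol_ne_sp2 n j
  have n7 := sp1_ne_vv n j
  have n8 := sp2_ne_vv n j
  have n9 := vv_ne_lil n hn j hj1 hj2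
  have n10 := vv_ne_ril n hn j hj1 hj2
  have n11 := lil_ne_sp2 n j
  have n12 := ril_ne_sp1 n j
  rcases hc1 with h1 | h1 | h1 <;> rcases hc3 with h2 | h2 | h2
  · -- e1 = lol, e2 = sp2
    have hlolT : lolE n j ∈ M := h1 ▸ he1M
    have hsp2T : sp2E n j ∈ M := h2 ▸ he2M
    have hf1 : f1 = sp2E n j := (key2 _ hsp2T msp2a).symm
    have hlilF : lilE n j ∉ M := fun h => by
      have hh : lilE n j = e2 := key3 _ h mlil
      rw [h2] at hh; exact n11 hh
    have hrolF : rolE n j ∉ M := fun h => by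
      have hh : rolE n j = f1 := key2 _ h mrol
      rw [hf1] at hh; exact n6 hh
    have hf2 : f2 = rilE n j := by
      rcases hc4 with h | h | h
      · exfalso
        have hh : sp1E n j = e1 := key1 _ (h ▸ hf2M) msp1a
        rw [h1] at hh; exact n2 hh.symm
      · exfalso
        have hh : vvE n j = e2 := key3 _ (h ▸ hf2M) mvvb
        rw [h2] at hh; exact n8 hh.symm
      · exact h
    have hrilT : rilE n j ∈ M := hf2 ▸ hf2M
    exact ⟨⟨fun hx => absurd hx.2 hlilF, fun hx => absurd hx.1 hrolF⟩,
      ⟨fun _ => Or.inr hrilT, fun _ => Or.inl hlolT⟩⟩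
  · -- e1 = lol, e2 = vv
    have hlolT : lolE n j ∈ M := h1 ▸ he1M
    have hvvT : vvE n j ∈ M := h2 ▸ he2M
    have hf2 : vvE n j = f2 := key4 _ hvvT mvva
    have hlilF : lilE n j ∉ M := fun h => by
      have hh : lilE n j = e2 := key3 _ h mlil
      rw [h2] at hh; exact n9 hh.symm
    have hrilF : rilE n j ∉ M := fun h => by
      have hh : rilE n j = f2 := key4 _ h mril
      rw [← hf2] at hh; exact n10 hh.symm
    have hf1 : f1 = rolE n j := by
      rcases hc2 with h | h | h
      · exfalso
        have hh : uuE n j = e1 := key1 _ (h ▸ hf1M) muu1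
        rw [h1] at hh; exact n1 hh.symm
      · exact h
      · exfalso
        have hh : sp2E n j = e2 := key3 _ (h ▸ hf1M) msp2b
        rw [h2] at hh; exact n8 hh
    have hrolT : rolE n j ∈ M := hf1 ▸ hf1M
    exact ⟨⟨fun hx => absurd hx.2 hlilF, fun hx => absurd hx.2 hrilF⟩,
      ⟨fun _ => Or.inl hrolT, fun _ => Or.inl hlolT⟩⟩
  · -- e1 = lol, e2 = lil
    have hlolT : lolE n j ∈ M := h1 ▸ he1M
    have hlilT : lilE n j ∈ M := h2 ▸ he2M
    have hf1 : f1 = rolE n j := by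
      rcases hc2 with h | h | h
      · exfalso
        have hh : uuE n j = e1 := key1 _ (h ▸ hf1M) muu1
        rw [h1] at hh; exact n1 hh.symm
      · exact h
      · exfalso
        have hh : sp2E n j = e2 := key3 _ (h ▸ hf1M) msp2b
        rw [h2] at hh; exact n11 hh.symm
    have hf2 : f2 = rilE n j := by
      rcases hc4 with h | h | h
      · exfalso
        have hh : sp1E n j = e1 := key1 _ (h ▸ hf2M) msp1a
        rw [h1] at hh; exact n2 hh.symm
      · exfalso
        have hh : vvE n j = e2 := key3 _ (h ▸ hf2M) mvvb
        rw [h2] at hh; exact n9 hh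
      · exact h
    have hrolT : rolE n j ∈ M := hf1 ▸ hf1M
    have hrilT : rilE n j ∈ M := hf2 ▸ hf2M
    exact ⟨⟨fun _ => ⟨hrolT, hrilT⟩, fun _ => ⟨hlolT, hlilT⟩⟩,
      ⟨fun _ => Or.inl hrolT, fun _ => Or.inl hlolT⟩⟩
  · -- e1 = uu, e2 = sp2 : impossible
    exfalso
    have ha : uuE n j = f1 := key2 _ (h1 ▸ he1M) muu2
    have hb : sp2E n j = f1 := key2 _ (h2 ▸ he2M) msp2a
    exact n4 (ha.trans hb.symm)
  · -- e1 = uu, e2 = vv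
    have huuT : uuE n j ∈ M := h1 ▸ he1M
    have hvvT : vvE n j ∈ M := h2 ▸ he2M
    have hf1 : uuE n j = f1 := key2 _ huuT muu2
    have hf2 : vvE n j = f2 := key4 _ hvvT mvva
    have hlolF : lolE n j ∉ M := fun h => by
      have hh : lolE n j = e1 := key1 _ h mlol
      rw [h1] at hh; exact n1 hh
    have hlilF : lilE n j ∉ M := fun h => by
      have hh : lilE n j = e2 := key3 _ h mlil
      rw [h2] at hh; exact n9 hh.symm
    have hrolF : rolE n j ∉ M := fun h => by
      have hh : rolE n j = f1 := key2 _ h mrol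
      rw [← hf1] at hh; exact n5 hh
    have hrilF : rilE n j ∉ M := fun h => by
      have hh : rilE n j = f2 := key4 _ h mril
      rw [← hf2] at hh; exact n10 hh.symm
    exact ⟨⟨fun hx => absurd hx.1 hlolF, fun hx => absurd hx.1 hrolF⟩,
      ⟨fun hx => hx.elim (fun h => absurd h hlolF) (fun h => absurd h hlilF),
       fun hx => hx.elim (fun h => absurd h hrolF) (fun h => absurd h hrilF)⟩⟩
  · -- e1 = uu, e2 = lil
    have huuT : uuE n j ∈ M := h1 ▸ he1M
    have hlilT : lilE n j ∈ M := h2 ▸ he2M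
    have hf1 : uuE n j = f1 := key2 _ huuT muu2
    have hlolF : lolE n j ∉ M := fun h => by
      have hh : lolE n j = e1 := key1 _ h mlol
      rw [h1] at hh; exact n1 hh
    have hrolF : rolE n j ∉ M := fun h => by
      have hh : rolE n j = f1 := key2 _ h mrol
      rw [← hf1] at hh; exact n5 hh
    have hf2 : f2 = rilE n j := by
      rcases hc4 with h | h | h
      · exfalso
        have hh : sp1E n j = e1 := key1 _ (h ▸ hf2M) msp1a
        rw [h1] at hh; exact n3 hh.symm
      · exfalso
        have hh : vvE n j = e2 := key3 _ (h ▸ hf2M) mvvb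
        rw [h2] at hh; exact n9 hh
      · exact h
    have hrilT : rilE n j ∈ M := hf2 ▸ hf2M
    exact ⟨⟨fun hx => absurd hx.1 hlolF, fun hx => absurd hx.1 hrolF⟩,
      ⟨fun _ => Or.inr hrilT, fun _ => Or.inr hlilT⟩⟩
  · -- e1 = sp1, e2 = sp2
    have hsp1T : sp1E n j ∈ M := h1 ▸ he1M
    have hsp2T : sp2E n j ∈ M := h2 ▸ he2M
    have hf1 : sp2E n j = f1 := key2 _ hsp2T msp2a
    have hf2 : sp1E n j = f2 := key4 _ hsp1T (by rw [sp1E]; exact Sym2.mem_mk_right _ _)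
    have hlolF : lolE n j ∉ M := fun h => by
      have hh : lolE n j = e1 := key1 _ h mlol
      rw [h1] at hh; exact n2 hh
    have hlilF : lilE n j ∉ M := fun h => by
      have hh : lilE n j = e2 := key3 _ h mlil
      rw [h2] at hh; exact n11 hh
    have hrolF : rolE n j ∉ M := fun h => by
      have hh : rolE n j = f1 := key2 _ h mrol
      rw [← hf1] at hh; exact n6 hh
    have hrilF : rilE n j ∉ M := fun h => by
      have hh : rilE n j = f2 := key4 _ h mril
      rw [← hf2] at hh; exact n12 hh
    exact ⟨⟨fun hx => absurd hx.1 hlolF, fun hx => absurd hx.1 hrolF⟩,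
      ⟨fun hx => hx.elim (fun h => absurd h hlolF) (fun h => absurd h hlilF),
       fun hx => hx.elim (fun h => absurd h hrolF) (fun h => absurd h hrilF)⟩⟩
  · -- e1 = sp1, e2 = vv : impossible
    exfalso
    have ha : sp1E n j = f2 := key4 _ (h1 ▸ he1M) (by rw [sp1E]; exact Sym2.mem_mk_right _ _)
    have hb : vvE n j = f2 := key4 _ (h2 ▸ he2M) mvva
    exact n7 (ha.trans hb.symm)
  · -- e1 = sp1, e2 = lil
    have hsp1T : sp1E n j ∈ M := h1 ▸ he1M
    have hlilT : lilE n j ∈ M := h2 ▸ he2M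
    have hf2 : sp1E n j = f2 := key4 _ hsp1T (by rw [sp1E]; exact Sym2.mem_mk_right _ _)
    have hlolF : lolE n j ∉ M := fun h => by
      have hh : lolE n j = e1 := key1 _ h mlol
      rw [h1] at hh; exact n2 hh
    have hrilF : rilE n j ∉ M := fun h => by
      have hh : rilE n j = f2 := key4 _ h mril
      rw [← hf2] at hh; exact n12 hh
    have hf1 : f1 = rolE n j := by
      rcases hc2 with h | h | h
      · exfalso
        have hh : uuE n j = e1 := key1 _ (h ▸ hf1M) muu1
        rw [h1] at hh; exact n3 hh
      · exact h
      · exfalso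
        have hh : sp2E n j = e2 := key3 _ (h ▸ hf1M) msp2b
        rw [h2] at hh; exact n11 hh.symm
    have hrolT : rolE n j ∈ M := hf1 ▸ hf1M
    exact ⟨⟨fun hx => absurd hx.1 hlolF, fun hx => absurd hx.2 hrilF⟩,
      ⟨fun _ => Or.inl hrolT, fun _ => Or.inr hlilT⟩⟩

lemma rol_lol (j : ℕ) (hj : 1 ≤ j) : rolE n j = lolE n (j+1) := by
  rw [rolE, lolE, show 2*(j+1)-2 = 2*j from by omega, show 2*(j+1)-1 = 2*j+1 from by omega]

lemma ril_lil (j : ℕ) (hj1 : 1 ≤ j) (hjn : j ≠ n) (hj2n : j ≠ 2*n) :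
    rilE n j = lilE n (j+1) := by
  rw [rilE, lilE, if_neg (by omega), if_neg (by omega),
    show 2*(j+1)-3 = 2*j-1 from by omega, show 2*(j+1) = 2*j+2 from by omega]

lemma chain (hn : 1 ≤ n) {M : Set (Sym2 (PapVert (2*(n+n))))}
    (hsub : ∀ e ∈ M, e ∈ papillonEdges n n)
    (huniq : ∀ v : PapVert (2*(n+n)), ∃! e, e ∈ M ∧ v ∈ e)
    (j0 : ℕ) (hj0 : 1 ≤ j0) :
    ∀ j, j0 ≤ j → j ≤ 2*n →
      (∀ k, j0 ≤ k → k < j → k ≠ n ∧ k ≠ 2*n) →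
      (((lolE n j0 ∈ M ∧ lilE n j0 ∈ M) ↔ (rolE n j ∈ M ∧ rilE n j ∈ M)) ∧
       ((lolE n j0 ∈ M ∨ lilE n j0 ∈ M) ↔ (rolE n j ∈ M ∨ rilE n j ∈ M))) := by
  intro j hj
  induction j, hj using Nat.le_induction with
  | base =>
    intro h2n _
    exact block n hn hsub huniq j0 hj0 h2n
  | succ m hm ih =>
    intro h2n hcond
    have ihm := ih (by omega) (fun k hk1 hk2 => hcond k hk1 (by omega))
    have heq1 : rolE n m = lolE n (m+1) := rol_lol n m (by omega)
    have heq2 : rilE n m = lilE n (m+1) := by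
      obtain ⟨hx, hy⟩ := hcond m (by omega) (by omega)
      exact ril_lil n m (by omega) hx hy
    have hbl := block n hn hsub huniq (m+1) (by omega) h2n
    rw [heq1, heq2] at ihm
    exact ⟨ihm.1.trans hbl.1, ihm.2.trans hbl.2⟩

lemma pu4n (hn : 1 ≤ n) : pu (2*(n+n)) (4*n) = pu (2*(n+n)) 0 := by
  rw [pu, pu]
  congr 1
  rw [show (4*n : ℕ) = 2*(n+n) from by omega]
  simp

lemma lolE_one (hn : 1 ≤ n) : lolE n 1 = aE n := by
  rw [lolE, aE, pu4n n hn, show (2*1-2 : ℕ) = 0 from rfl, show (2*1-1 : ℕ) = 1 from rfl]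
  exact Sym2.eq_swap

lemma lilE_one : lilE n 1 = cE n := by rw [lilE, if_pos (Or.inl rfl)]

lemma rolE_n : rolE n n = dE n := by rw [rolE, dE]

lemma rilE_n : rilE n n = bE n := by rw [rilE, if_pos (Or.inl rfl)]

lemma lolE_np1 : lolE n (n+1) = dE n := by
  rw [lolE, dE, show 2*(n+1)-2 = 2*n from by omega, show 2*(n+1)-1 = 2*n+1 from by omega]

lemma lilE_np1 : lilE n (n+1) = cE n := by rw [lilE, if_pos (Or.inr rfl)]

lemma rolE_2n (hn : 1 ≤ n) : rolE n (2*n) = aE n := by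
  rw [rolE, aE]
  have h1 : pu (2*(n+n)) (2*(2*n)) = pu (2*(n+n)) (4*n) := by
    rw [show 2*(2*n) = 4*n from by ring]
  have h2 : pu (2*(n+n)) (2*(2*n)+1) = pu (2*(n+n)) 1 := by
    rw [pu, pu]
    congr 1
    rw [show (2*(2*n)+1 : ℕ) = 2*(n+n)+1 from by omega, Nat.cast_add, ZMod.natCast_self,
      zero_add]
  rw [h1, h2]
  exact Sym2.eq_swap

lemma rilE_2n (hn : 1 ≤ n) : rilE n (2*n) = bE n := by rw [rilE, if_pos (Or.inr rfl)]

lemma aE_ne_bE : aE n ≠ bE n := by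
  rw [aE, bE]; intro hcon; rw [Sym2.eq_iff] at hcon
  simp [pu, pv, Prod.mk.injEq] at hcon

lemma aE_ne_cE : aE n ≠ cE n := by
  rw [aE, cE]; intro hcon; rw [Sym2.eq_iff] at hcon
  simp [pu, pv, Prod.mk.injEq] at hcon

lemma bE_ne_dE : bE n ≠ dE n := by
  rw [bE, dE]; intro hcon; rw [Sym2.eq_iff] at hcon
  simp [pu, pv, Prod.mk.injEq] at hcon

lemma cE_ne_dE : cE n ≠ dE n := by
  rw [cE, dE]; intro hcon; rw [Sym2.eq_iff] at hcon
  simp [pu, pv, Prod.mk.injEq] at hcon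

lemma aE_ne_dE (hn : 1 ≤ n) : aE n ≠ dE n := by
  rw [aE, dE]
  intro hcon
  rw [Sym2.eq_iff] at hcon
  rcases hcon with ⟨ha, hb⟩ | ⟨ha, hb⟩ <;>
  · have h1 := congrArg Prod.snd ha
    have h2 := congrArg Prod.snd hb
    simp only [pu, pv] at h1 h2
    first
    | rcases cast_eq_cases (N := 2*(n+n)) h1 (by omega) (by omega) (by omega)
        with h' | h' | h' <;> omega
    | rcases cast_eq_cases (N := 2*(n+n)) h2 (by omega) (by omega) (by omega)
        with h' | h' | h' <;> omega

lemma bE_ne_cE (hn : 1 ≤ n) : bE n ≠ cE n := by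
  rw [bE, cE]
  intro hcon
  rw [Sym2.eq_iff] at hcon
  rcases hcon with ⟨ha, hb⟩ | ⟨ha, hb⟩ <;>
  · have h1 := congrArg Prod.snd ha
    have h2 := congrArg Prod.snd hb
    simp only [pu, pv] at h1 h2
    first
    | rcases cast_eq_cases (N := 2*(n+n)) h1 (by omega) (by omega) (by omega)
        with h' | h' | h' <;> omega
    | rcases cast_eq_cases (N := 2*(n+n)) h2 (by omega) (by omega) (by omega)
        with h' | h' | h' <;> omega

end PapAux

/-- If a perfect matching `M` of the balanced papillon graph `P_n` meets the principal
4-edge-cut `X = {a, b, c, d}` in exactly two edges, then `M ∩ X = {a, d}` or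
`M ∩ X = {b, c}`. -/
theorem statement10 (n : ℕ) (hn : 1 ≤ n) (M : Set (Sym2 (PapVert (2 * (n + n)))))
    (hM : IsPerfMatching (papillon n n) M) (h2 : (M ∩ Xcut n).ncard = 2) :
    M ∩ Xcut n = {s(pu (2 * (n + n)) 1, pu (2 * (n + n)) (4 * n)),
                  s(pu (2 * (n + n)) (2 * n), pu (2 * (n + n)) (2 * n + 1))} ∨
    M ∩ Xcut n = {s(pv (2 * (n + n)) (2 * n - 1), pv (2 * (n + n)) (4 * n - 1)),
                  s(pv (2 * (n + n)) 2, pv (2 * (n + n)) (2 * n + 2))} := by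
  classical
  have hsub : ∀ e ∈ M, e ∈ papillonEdges n n := by
    intro e he
    have h := hM.1 he
    rw [papillon, SimpleGraph.edgeSet_fromEdgeSet] at h
    exact h.1
  have huniq := hM.2
  have wing1 := PapAux.chain n hn hsub huniq 1 (by omega) n (by omega) (by omega)
    (fun k hk1 hk2 => ⟨by omega, by omega⟩)
  have wing2 := PapAux.chain n hn hsub huniq (n+1) (by omega) (2*n) (by omega) (by omega)
    (fun k hk1 hk2 => ⟨by omega, by omega⟩)
  rw [PapAux.lolE_one n hn, PapAux.lilE_one, PapAux.rolE_n, PapAux.rilE_n] at wing1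
  rw [PapAux.lolE_np1, PapAux.lilE_np1, PapAux.rolE_2n n hn, PapAux.rilE_2n n hn] at wing2
  obtain ⟨w1p, w1o⟩ := wing1
  obtain ⟨w2p, w2o⟩ := wing2
  have hX : Xcut n = {PapAux.aE n, PapAux.bE n, PapAux.cE n, PapAux.dE n} := rfl
  have hab := PapAux.aE_ne_bE n
  have hac := PapAux.aE_ne_cE n
  have had := PapAux.aE_ne_dE n hn
  have hbc := PapAux.bE_ne_cE n hn
  have hbd := PapAux.bE_ne_dE n
  have hcd := PapAux.cE_ne_dE n
  by_cases ha : PapAux.aE n ∈ M <;> by_cases hb : PapAux.bE n ∈ M <;>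
    by_cases hc : PapAux.cE n ∈ M <;> by_cases hd : PapAux.dE n ∈ M
  · -- a,b,c,d ∈ M : impossible by cardinality
    exfalso
    have hfull : M ∩ Xcut n = Xcut n := by
      apply Set.inter_eq_right.mpr
      intro e he
      rw [hX] at he
      simp only [Set.mem_insert_iff, Set.mem_singleton_iff] at he
      rcases he with rfl | rfl | rfl | rfl <;> assumption
    rw [hfull, hX] at h2
    rw [Set.ncard_insert_of_notMem
          (by simp only [Set.mem_insert_iff, Set.mem_singleton_iff]; push_neg
              exact ⟨hab, hac, had⟩)
          (((Set.finite_singleton _).insert _).insert _),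
        Set.ncard_insert_of_notMem
          (by simp only [Set.mem_insert_iff, Set.mem_singleton_iff]; push_neg
              exact ⟨hbc, hbd⟩)
          ((Set.finite_singleton _).insert _),
        Set.ncard_insert_of_notMem (by simpa using hcd) (Set.finite_singleton _),
        Set.ncard_singleton] at h2
    omega
  · exact absurd (w1p.mp ⟨ha, hc⟩).1 hd
  · exact absurd (w1p.mpr ⟨hd, hb⟩).2 hc
  · exact absurd (w2p.mpr ⟨ha, hb⟩).1 hd
  · exact absurd (w2p.mp ⟨hd, hc⟩).2 hb
  · exact absurd (w1p.mp ⟨ha, hc⟩).1 hd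
  · -- a, d ∈ M, b, c ∉ M
    left
    have hgoal : M ∩ Xcut n = {PapAux.aE n, PapAux.dE n} := by
      ext e
      simp only [Set.mem_inter_iff, hX, Set.mem_insert_iff, Set.mem_singleton_iff]
      constructor
      · rintro ⟨heM, rfl | rfl | rfl | rfl⟩
        · exact Or.inl rfl
        · exact absurd heM hb
        · exact absurd heM hc
        · exact Or.inr rfl
      · rintro (rfl | rfl)
        · exact ⟨ha, Or.inl rfl⟩
        · exact ⟨hd, Or.inr (Or.inr (Or.inr rfl))⟩
    exact hgoal
  · exact (w1o.mp (Or.inl ha)).elim (fun h => absurd h hd) (fun h => absurd h hb)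
  · exact absurd (w1p.mpr ⟨hd, hb⟩).1 ha
  · -- b, c ∈ M, a, d ∉ M
    right
    have hgoal : M ∩ Xcut n = {PapAux.bE n, PapAux.cE n} := by
      ext e
      simp only [Set.mem_inter_iff, hX, Set.mem_insert_iff, Set.mem_singleton_iff]
      constructor
      · rintro ⟨heM, rfl | rfl | rfl | rfl⟩
        · exact absurd heM ha
        · exact Or.inl rfl
        · exact Or.inr rfl
        · exact absurd heM hd
      · rintro (rfl | rfl)
        · exact ⟨hb, Or.inr (Or.inl rfl)⟩
        · exact ⟨hc, Or.inr (Or.inr (Or.inl rfl))⟩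
    exact hgoal
  · exact absurd (w1p.mpr ⟨hd, hb⟩).1 ha
  · exact (w1o.mpr (Or.inr hb)).elim (fun h => absurd h ha) (fun h => absurd h hc)
  · exact absurd (w2p.mp ⟨hd, hc⟩).1 ha
  · exact (w1o.mp (Or.inr hc)).elim (fun h => absurd h hd) (fun h => absurd h hb)
  · exact (w1o.mpr (Or.inl hd)).elim (fun h => absurd h ha) (fun h => absurd h hc)
  · -- none in M : impossible by cardinality
    exfalso
    have hempty : M ∩ Xcut n = ∅ := by
      ext e
      simp only [Set.mem_inter_iff, hX, Set.mem_insert_iff, Set.mem_singleton_iff,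
        Set.mem_empty_iff_false, iff_false, not_and]
      rintro heM (rfl | rfl | rfl | rfl)
      · exact ha heM
      · exact hb heM
      · exact hc heM
      · exact hd heM
    rw [hempty] at h2
    simp at h2
end

section
/- Let n be a positive integer, let M be a perfect matching of the balanced papillon graph P_n, and let X be its principal 4-edge-cut. If |M ∩ X| = 2, then for every j ∈ {1,…,2n} the set M ∩ ∂T_j has exactly two edges, and these two edges are neither the pair consisting of the edge of ∂T_j incident to u_{2j−1} together with the edge of ∂T_j incident to v_{2j}, nor the pair consisting of the edge of ∂T_j incident to u_{2j} together with the edge of ∂T_j incident to v_{2j−1}. -/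
open SimpleGraph


lemma pu_eq_iff {N a b : ℕ} : pu N a = pu N b ↔ ((a:ℕ):ZMod N) = (b:ℕ) := by
  simp [pu]
lemma pv_eq_iff {N a b : ℕ} : pv N a = pv N b ↔ ((a:ℕ):ZMod N) = (b:ℕ) := by
  simp [pv]
lemma cast_succ_eq {N : ℕ} {a b : ℕ} (h : ((a:ℕ):ZMod N) = (b:ℕ)) :
    ((a+1:ℕ):ZMod N) = ((b+1:ℕ):ZMod N) := by push_cast; rw [h]
lemma cast_pred_eq {N : ℕ} {a b : ℕ} (ha : 1 ≤ a) (hb : 1 ≤ b)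
    (h : ((a:ℕ):ZMod N) = (b:ℕ)) : ((a-1:ℕ):ZMod N) = ((b-1:ℕ):ZMod N) := by
  rw [Nat.cast_sub ha, Nat.cast_sub hb, h]

lemma cast_eq_of {n a b : ℕ} (h : a = b ∨ a = b + 4*n ∨ b = a + 4*n) :
    ((a : ℕ) : ZMod (2*(n+n))) = (b : ℕ) := by
  have h4 : ((4*n : ℕ) : ZMod (2*(n+n))) = 0 := by
    have h' : (4*n : ℕ) = 2*(n+n) := by ring
    rw [h', ZMod.natCast_self]
  rcases h with rfl | rfl | rfl
  · rfl
  · rw [Nat.cast_add, h4, add_zero]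
  · rw [Nat.cast_add, h4, add_zero]

lemma classify_u (n : ℕ) (m : ℕ) (hm : 1 ≤ m) (w : PapVert (2*(n+n)))
    (h : s(pu (2*(n+n)) m, w) ∈ papillonEdges n n) :
    w = pu (2*(n+n)) (m+1) ∨ w = pu (2*(n+n)) (m-1) ∨ w = pv (2*(n+n)) m := by
  simp only [papillonEdges, Set.mem_setOf_eq] at h
  rcases h with ⟨i,hi1,hi2,he⟩|he|⟨i,hi1,hi2,he⟩|⟨i,hi1,hi2,he⟩|⟨i,hi1,hi2,hi3,he⟩|he|he
  · rw [Sym2.eq_iff] at he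
    rcases he with ⟨h1,rfl⟩|⟨h1,rfl⟩
    · left
      rw [pu_eq_iff] at h1 ⊢
      exact (cast_succ_eq h1).symm
    · right; left
      rw [pu_eq_iff] at h1 ⊢
      have h2 := cast_pred_eq hm (by omega) h1
      rw [Nat.add_sub_cancel] at h2
      exact h2.symm
  · rw [Sym2.eq_iff] at he
    rcases he with ⟨h1,rfl⟩|⟨h1,rfl⟩
    · left
      rw [pu_eq_iff] at h1 ⊢
      have h2 := cast_succ_eq h1
      rw [show ((1:ℕ):ZMod (2*(n+n))) = ((2*(n+n)+1:ℕ):ZMod (2*(n+n))) from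
        cast_eq_of (by right; right; omega)]
      exact h2.symm
    · right; left
      rw [pu_eq_iff] at h1 ⊢
      have h2 := cast_pred_eq hm (by omega) h1
      rw [show ((2*(n+n):ℕ):ZMod (2*(n+n))) = ((1-1:ℕ):ZMod (2*(n+n))) from
        cast_eq_of (by right; left; omega)]
      exact h2.symm
  · rw [Sym2.eq_iff] at he
    rcases he with ⟨h1,rfl⟩|⟨h1,rfl⟩
    · right; right
      rw [pu_eq_iff] at h1
      rw [pv_eq_iff]
      exact h1.symm
    · exact absurd h1 (by simp [pu, pv])
  all_goals (rw [Sym2.eq_iff] at he; rcases he with ⟨h1,h2⟩|⟨h1,h2⟩ <;>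
    exact absurd h1 (by simp [pu, pv]))

lemma cast_eq_cases {n a b : ℕ} (hn : 1 ≤ n) (ha : a < 8*n) (hb : b < 8*n)
    (h : ((a : ℕ) : ZMod (2*(n+n))) = (b : ℕ)) :
    a = b ∨ a = b + 4*n ∨ b = a + 4*n := by
  rw [ZMod.natCast_eq_natCast_iff] at h
  obtain ⟨k, hk⟩ := h.dvd
  have hk' : (b:ℤ) - a = 4*n*k := by push_cast at hk ⊢; linarith
  have hbnd : -(8*(n:ℤ)) < (b:ℤ) - a ∧ (b:ℤ) - a < 8*n := by
    constructor <;> push_cast <;> omega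
  have hk2 : |k| < 2 := by
    by_contra hcon
    have h2 : (2:ℤ) ≤ |k| := by omega
    have h3 : (4*(n:ℤ))*2 ≤ (4*n)*|k| := by
      apply mul_le_mul_of_nonneg_left h2; positivity
    have habs : |(b:ℤ) - a| < 8*n := abs_lt.mpr hbnd
    rw [hk', abs_mul, abs_of_nonneg (by positivity : (0:ℤ) ≤ 4*(n:ℤ))] at habs
    linarith
  have hk3 : k = -1 ∨ k = 0 ∨ k = 1 := by rw [abs_lt] at hk2; omega
  rcases hk3 with rfl|rfl|rfl <;> norm_num at hk' <;> omega

/-- External inner neighbour of `v_{2j-1}`. -/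
def xV1 (n j : ℕ) : PapVert (2*(n+n)) :=
  if j = n ∨ j = 2*n then pv (2*(n+n)) (2*j-1+2*n) else pv (2*(n+n)) (2*j+2)
/-- External inner neighbour of `v_{2j}`. -/
def xV2 (n j : ℕ) : PapVert (2*(n+n)) :=
  if j = 1 ∨ j = n+1 then pv (2*(n+n)) (2*j+2*n) else pv (2*(n+n)) (2*j-3)

lemma classify_v1 (n : ℕ) (hn : 1 ≤ n) (j : ℕ) (hj1 : 1 ≤ j) (hj2 : j ≤ 2*n)
    (w : PapVert (2*(n+n)))
    (h : s(pv (2*(n+n)) (2*j-1), w) ∈ papillonEdges n n) :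
    w = pu (2*(n+n)) (2*j-1) ∨ w = pv (2*(n+n)) (2*j) ∨ w = xV1 n j := by
  simp only [papillonEdges, Set.mem_setOf_eq, Nat.min_self] at h
  rcases h with ⟨i,hi1,hi2,he⟩|he|⟨i,hi1,hi2,he⟩|⟨i,hi1,hi2,he⟩|⟨i,hi1,hi2,hi3,he⟩|he|he
  · rw [Sym2.eq_iff] at he
    rcases he with ⟨h1,h2⟩|⟨h1,h2⟩ <;> exact absurd h1 (by simp [pu, pv])
  · rw [Sym2.eq_iff] at he
    rcases he with ⟨h1,h2⟩|⟨h1,h2⟩ <;> exact absurd h1 (by simp [pu, pv])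
  · rw [Sym2.eq_iff] at he
    rcases he with ⟨h1,h2⟩|⟨h1,rfl⟩
    · exact absurd h1 (by simp [pu, pv])
    · left
      rw [pv_eq_iff] at h1
      rw [pu_eq_iff]
      exact h1.symm
  · rw [Sym2.eq_iff] at he
    rcases he with ⟨h1,rfl⟩|⟨h1,rfl⟩
    · right; left
      rw [pv_eq_iff] at h1 ⊢
      have h2 := cast_succ_eq h1
      rw [show 2*j-1+1 = 2*j from by omega, show 2*i-1+1 = 2*i from by omega] at h2
      exact h2.symm
    · rw [pv_eq_iff] at h1
      rcases cast_eq_cases hn (by omega) (by omega) h1 with h|h|h <;> omega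
  · rw [Sym2.eq_iff] at he
    rcases he with ⟨h1,rfl⟩|⟨h1,rfl⟩
    · right; right
      rw [pv_eq_iff] at h1
      have hij : j = i := by
        rcases cast_eq_cases hn (by omega) (by omega) h1 with h|h|h <;> omega
      subst hij
      rw [xV1, if_neg (by omega)]
    · rw [pv_eq_iff] at h1
      rcases cast_eq_cases hn (by omega) (by omega) h1 with h|h|h <;> omega
  · rw [Sym2.eq_iff] at he
    rcases he with ⟨h1,h2⟩|⟨h1,h2⟩ <;> rw [pv_eq_iff] at h1 <;>
      rcases cast_eq_cases hn (by omega) (by omega) h1 with h|h|h <;> omega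
  · rw [Sym2.eq_iff] at he
    rcases he with ⟨h1,rfl⟩|⟨h1,rfl⟩
    · right; right
      rw [pv_eq_iff] at h1
      have hjn : j = n := by
        rcases cast_eq_cases hn (by omega) (by omega) h1 with h|h|h <;> omega
      rw [hjn, xV1, if_pos (Or.inl rfl), show 2*n-1+2*n = 2*(n+n)-1 from by omega]
    · right; right
      rw [pv_eq_iff] at h1
      have hjn : j = 2*n := by
        rcases cast_eq_cases hn (by omega) (by omega) h1 with h|h|h <;> omega
      rw [hjn, xV1, if_pos (Or.inr rfl), pv_eq_iff]
      exact cast_eq_of (by right; right; omega)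

lemma classify_v2 (n : ℕ) (hn : 1 ≤ n) (j : ℕ) (hj1 : 1 ≤ j) (hj2 : j ≤ 2*n)
    (w : PapVert (2*(n+n)))
    (h : s(pv (2*(n+n)) (2*j), w) ∈ papillonEdges n n) :
    w = pu (2*(n+n)) (2*j) ∨ w = pv (2*(n+n)) (2*j-1) ∨ w = xV2 n j := by
  simp only [papillonEdges, Set.mem_setOf_eq, Nat.min_self] at h
  rcases h with ⟨i,hi1,hi2,he⟩|he|⟨i,hi1,hi2,he⟩|⟨i,hi1,hi2,he⟩|⟨i,hi1,hi2,hi3,he⟩|he|he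
  · rw [Sym2.eq_iff] at he
    rcases he with ⟨h1,h2⟩|⟨h1,h2⟩ <;> exact absurd h1 (by simp [pu, pv])
  · rw [Sym2.eq_iff] at he
    rcases he with ⟨h1,h2⟩|⟨h1,h2⟩ <;> exact absurd h1 (by simp [pu, pv])
  · rw [Sym2.eq_iff] at he
    rcases he with ⟨h1,h2⟩|⟨h1,rfl⟩
    · exact absurd h1 (by simp [pu, pv])
    · left
      rw [pv_eq_iff] at h1
      rw [pu_eq_iff]
      exact h1.symm
  · rw [Sym2.eq_iff] at he
    rcases he with ⟨h1,rfl⟩|⟨h1,rfl⟩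
    · rw [pv_eq_iff] at h1
      rcases cast_eq_cases hn (by omega) (by omega) h1 with h|h|h <;> omega
    · right; left
      rw [pv_eq_iff] at h1 ⊢
      have hij : j = i := by
        rcases cast_eq_cases hn (by omega) (by omega) h1 with h|h|h <;> omega
      subst hij
      rfl
  · rw [Sym2.eq_iff] at he
    rcases he with ⟨h1,rfl⟩|⟨h1,rfl⟩
    · rw [pv_eq_iff] at h1
      rcases cast_eq_cases hn (by omega) (by omega) h1 with h|h|h <;> omega
    · right; right
      rw [pv_eq_iff] at h1
      have hij : i = j - 1 ∧ 2 ≤ j := by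
        rcases cast_eq_cases hn (by omega) (by omega) h1 with h|h|h <;> omega
      rw [xV2, if_neg (by omega), show 2*i-1 = 2*j-3 from by omega]
  · rw [Sym2.eq_iff] at he
    rcases he with ⟨h1,rfl⟩|⟨h1,rfl⟩
    · right; right
      rw [pv_eq_iff] at h1
      have hj : j = 1 := by
        rcases cast_eq_cases hn (by omega) (by omega) h1 with h|h|h <;> omega
      rw [hj, xV2, if_pos (Or.inl rfl), show 2*n+2 = 2*1+2*n from by omega]
    · right; right
      rw [pv_eq_iff] at h1
      have hj : j = n+1 := by
        rcases cast_eq_cases hn (by omega) (by omega) h1 with h|h|h <;> omega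
      rw [hj, xV2, if_pos (Or.inr rfl), pv_eq_iff]
      exact cast_eq_of (by right; right; omega)
  · rw [Sym2.eq_iff] at he
    rcases he with ⟨h1,h2⟩|⟨h1,h2⟩ <;> rw [pv_eq_iff] at h1 <;>
      rcases cast_eq_cases hn (by omega) (by omega) h1 with h|h|h <;> omega

lemma cast_ne {n a b : ℕ} (hn : 1 ≤ n) (ha : a < 8*n) (hb : b < 8*n)
    (h1 : a ≠ b) (h2 : a ≠ b + 4*n) (h3 : b ≠ a + 4*n) :
    ((a : ℕ) : ZMod (2*(n+n))) ≠ (b : ℕ) := fun h => by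
  rcases cast_eq_cases hn ha hb h with h|h|h <;> omega

/-- Indicator of a proposition. -/
noncomputable def ind (P : Prop) : ℕ := @ite ℕ P (Classical.propDecidable P) 1 0

lemma ind_pos {P : Prop} (h : P) : ind P = 1 := by simp [ind, h]
lemma ind_neg {P : Prop} (h : ¬P) : ind P = 0 := by simp [ind, h]
lemma ind_le (P : Prop) : ind P ≤ 1 := by
  by_cases h : P
  · rw [ind_pos h]
  · rw [ind_neg h]; omega
lemma ind_congr {P Q : Prop} (h : P ↔ Q) : ind P = ind Q := by
  by_cases hP : P
  · rw [ind_pos hP, ind_pos (h.mp hP)]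
  · rw [ind_neg hP, ind_neg (fun hq => hP (h.mpr hq))]
lemma ind_sum_one {P Q : Prop} (h : ind P + ind Q = 1) : (P ∧ ¬Q) ∨ (¬P ∧ Q) := by
  by_cases hP : P <;> by_cases hQ : Q
  · rw [ind_pos hP, ind_pos hQ] at h; omega
  · exact Or.inl ⟨hP, hQ⟩
  · exact Or.inr ⟨hP, hQ⟩
  · rw [ind_neg hP, ind_neg hQ] at h; omega

lemma puNe' {n : ℕ} (hn : 1 ≤ n) {a b : ℕ} (ha : a < 8*n) (hb : b < 8*n)
    (h1 : a ≠ b) (h2 : a ≠ b + 4*n) (h3 : b ≠ a + 4*n) :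
    pu (2*(n+n)) a ≠ pu (2*(n+n)) b := by
  rw [Ne, pu_eq_iff]; exact cast_ne hn ha hb h1 h2 h3
lemma pvNe' {n : ℕ} (hn : 1 ≤ n) {a b : ℕ} (ha : a < 8*n) (hb : b < 8*n)
    (h1 : a ≠ b) (h2 : a ≠ b + 4*n) (h3 : b ≠ a + 4*n) :
    pv (2*(n+n)) a ≠ pv (2*(n+n)) b := by
  rw [Ne, pv_eq_iff]; exact cast_ne hn ha hb h1 h2 h3
lemma pu_ne_pv' {N a b : ℕ} : pu N a ≠ pv N b := by simp [pu, pv]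
lemma pv_ne_pu' {N a b : ℕ} : pv N a ≠ pu N b := by simp [pu, pv]
lemma xV1_ne_pu {n jj a : ℕ} : xV1 n jj ≠ pu (2*(n+n)) a := by
  rw [xV1]; split_ifs <;> simp [pu, pv]
lemma xV2_ne_pu {n jj a : ℕ} : xV2 n jj ≠ pu (2*(n+n)) a := by
  rw [xV2]; split_ifs <;> simp [pu, pv]

lemma inv_eq {V : Type*} {f : V → V} (hinv : ∀ w, f (f w) = w) {a b : V}
    (h : f a = b) : f b = a := by rw [← h, hinv]

/-- `v_{2j}` is not the external neighbour of `v_{2j-1}`. -/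
lemma pv_ne_xV1 {n jj : ℕ} (hn : 1 ≤ n) (h1 : 1 ≤ jj) (h2 : jj ≤ 2*n) :
    pv (2*(n+n)) (2*jj) ≠ xV1 n jj := by
  rw [xV1]; split_ifs with h
  · exact pvNe' hn (by omega) (by omega) (by omega) (by omega) (by omega)
  · exact pvNe' hn (by omega) (by omega) (by omega) (by omega) (by omega)
lemma pv_ne_xV1' {n jj : ℕ} (hn : 1 ≤ n) (h1 : 1 ≤ jj) (h2 : jj ≤ 2*n) :
    pv (2*(n+n)) (2*jj-1) ≠ xV1 n jj := by
  rw [xV1]; split_ifs with h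
  · exact pvNe' hn (by omega) (by omega) (by omega) (by omega) (by omega)
  · exact pvNe' hn (by omega) (by omega) (by omega) (by omega) (by omega)
lemma pv_ne_xV2 {n jj : ℕ} (hn : 1 ≤ n) (h1 : 1 ≤ jj) (h2 : jj ≤ 2*n) :
    pv (2*(n+n)) (2*jj-1) ≠ xV2 n jj := by
  rw [xV2]; split_ifs with h
  · exact pvNe' hn (by omega) (by omega) (by omega) (by omega) (by omega)
  · exact pvNe' hn (by omega) (by omega) (by omega) (by omega) (by omega)
lemma pv_ne_xV2' {n jj : ℕ} (hn : 1 ≤ n) (h1 : 1 ≤ jj) (h2 : jj ≤ 2*n) :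
    pv (2*(n+n)) (2*jj) ≠ xV2 n jj := by
  rw [xV2]; split_ifs with h
  · exact pvNe' hn (by omega) (by omega) (by omega) (by omega) (by omega)
  · exact pvNe' hn (by omega) (by omega) (by omega) (by omega) (by omega)

def gUp (n : ℕ) (f : PapVert (2*(n+n)) → PapVert (2*(n+n))) (jj : ℕ) : Prop :=
  f (pu (2*(n+n)) (2*jj-1)) = pu (2*(n+n)) (2*jj-2)
def fUp (n : ℕ) (f : PapVert (2*(n+n)) → PapVert (2*(n+n))) (jj : ℕ) : Prop :=
  f (pu (2*(n+n)) (2*jj)) = pu (2*(n+n)) (2*jj+1)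
def fVp (n : ℕ) (f : PapVert (2*(n+n)) → PapVert (2*(n+n))) (jj : ℕ) : Prop :=
  f (pv (2*(n+n)) (2*jj-1)) = xV1 n jj
def gVp (n : ℕ) (f : PapVert (2*(n+n)) → PapVert (2*(n+n))) (jj : ℕ) : Prop :=
  f (pv (2*(n+n)) (2*jj)) = xV2 n jj

lemma local_count (n : ℕ) (hn : 1 ≤ n)
    (f : PapVert (2*(n+n)) → PapVert (2*(n+n)))
    (hadj : ∀ w, s(w, f w) ∈ papillonEdges n n) (hinv : ∀ w, f (f w) = w)
    (jj : ℕ) (h1 : 1 ≤ jj) (h2 : jj ≤ 2*n) :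
    ind (gUp n f jj) + ind (gVp n f jj) = ind (fUp n f jj) + ind (fVp n f jj) := by
  have cA1 := classify_u n (2*jj-1) (by omega) _ (hadj (pu (2*(n+n)) (2*jj-1)))
  rw [show 2*jj-1+1 = 2*jj from by omega, show 2*jj-1-1 = 2*jj-2 from by omega] at cA1
  have cA2 := classify_u n (2*jj) (by omega) _ (hadj (pu (2*(n+n)) (2*jj)))
  have cB1 := classify_v1 n hn jj h1 h2 _ (hadj (pv (2*(n+n)) (2*jj-1)))
  have cB2 := classify_v2 n hn jj h1 h2 _ (hadj (pv (2*(n+n)) (2*jj)))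
  have d1 : pu (2*(n+n)) (2*jj) ≠ pu (2*(n+n)) (2*jj-2) :=
    puNe' hn (by omega) (by omega) (by omega) (by omega) (by omega)
  have d3 : pu (2*(n+n)) (2*jj-1) ≠ pu (2*(n+n)) (2*jj+1) :=
    puNe' hn (by omega) (by omega) (by omega) (by omega) (by omega)
  have d2 : pv (2*(n+n)) (2*jj) ≠ xV1 n jj := pv_ne_xV1 hn h1 h2
  have d4 : pv (2*(n+n)) (2*jj-1) ≠ xV2 n jj := pv_ne_xV2 hn h1 h2
  unfold gUp fUp fVp gVp
  rcases cA1 with h|h|h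
  · -- f u₁ = u₂
    have ha2 := inv_eq hinv h
    have ngU : ¬ f (pu (2*(n+n)) (2*jj-1)) = pu (2*(n+n)) (2*jj-2) :=
      fun hc => d1 (h.symm.trans hc)
    have nfU : ¬ f (pu (2*(n+n)) (2*jj)) = pu (2*(n+n)) (2*jj+1) :=
      fun hc => d3 (ha2.symm.trans hc)
    rcases cB1 with h'|h'|h'
    · exact absurd (h.symm.trans (inv_eq hinv h')) (by simp [pu, pv])
    · have hb2 := inv_eq hinv h'
      have ngV : ¬ f (pv (2*(n+n)) (2*jj)) = xV2 n jj :=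
        fun hc => d4 (hb2.symm.trans hc)
      have nfV : ¬ f (pv (2*(n+n)) (2*jj-1)) = xV1 n jj :=
        fun hc => d2 (h'.symm.trans hc)
      rw [ind_neg ngU, ind_neg ngV, ind_neg nfU, ind_neg nfV]
    · have hgV : f (pv (2*(n+n)) (2*jj)) = xV2 n jj := by
        rcases cB2 with h3|h3|h3
        · exact absurd (ha2.symm.trans (inv_eq hinv h3)) (by simp [pu, pv])
        · exact absurd ((inv_eq hinv h3).symm.trans h') d2
        · exact h3
      rw [ind_neg ngU, ind_pos hgV, ind_neg nfU, ind_pos h']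
  · -- f u₁ = u₀ : gU
    rcases cB1 with h'|h'|h'
    · exact absurd (h.symm.trans (inv_eq hinv h')) (by simp [pu, pv])
    · have hb2 := inv_eq hinv h'
      have ngV : ¬ f (pv (2*(n+n)) (2*jj)) = xV2 n jj :=
        fun hc => d4 (hb2.symm.trans hc)
      have nfV : ¬ f (pv (2*(n+n)) (2*jj-1)) = xV1 n jj :=
        fun hc => d2 (h'.symm.trans hc)
      have hfU : f (pu (2*(n+n)) (2*jj)) = pu (2*(n+n)) (2*jj+1) := by
        rcases cA2 with h3|h3|h3
        · exact h3
        · exact absurd ((inv_eq hinv h3).symm.trans h) d1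
        · exact absurd (hb2.symm.trans (inv_eq hinv h3)) (by simp [pu, pv])
      rw [ind_pos h, ind_neg ngV, ind_pos hfU, ind_neg nfV]
    · -- f v₁ = x₁ : fV
      rcases cA2 with h3|h3|h3
      · -- fU too; derive gV
        have hgV : f (pv (2*(n+n)) (2*jj)) = xV2 n jj := by
          rcases cB2 with h4|h4|h4
          · exact absurd (h3.symm.trans (inv_eq hinv h4)) (by simp [pu, pv])
          · exact absurd ((inv_eq hinv h4).symm.trans h') d2
          · exact h4
        rw [ind_pos h, ind_pos hgV, ind_pos h3, ind_pos h']
      · exact absurd ((inv_eq hinv h3).symm.trans h) d1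
      · -- f u₂ = v₂
        have hv2 := inv_eq hinv h3
        have nfU : ¬ f (pu (2*(n+n)) (2*jj)) = pu (2*(n+n)) (2*jj+1) :=
          fun hc => (by simp [pu, pv] : ¬ pv (2*(n+n)) (2*jj) = pu (2*(n+n)) (2*jj+1))
            (h3.symm.trans hc)
        have ngV : ¬ f (pv (2*(n+n)) (2*jj)) = xV2 n jj :=
          fun hc => (xV2_ne_pu (a := 2*jj)) ((hv2.symm.trans hc).symm)
        rw [ind_pos h, ind_neg ngV, ind_neg nfU, ind_pos h']
  · -- f u₁ = v₁
    have hv1 := inv_eq hinv h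
    have ngU : ¬ f (pu (2*(n+n)) (2*jj-1)) = pu (2*(n+n)) (2*jj-2) :=
      fun hc => (by simp [pu, pv] : ¬ pv (2*(n+n)) (2*jj-1) = pu (2*(n+n)) (2*jj-2))
        (h.symm.trans hc)
    have nfV : ¬ f (pv (2*(n+n)) (2*jj-1)) = xV1 n jj :=
      fun hc => (xV1_ne_pu (a := 2*jj-1)) ((hv1.symm.trans hc).symm)
    rcases cA2 with h3|h3|h3
    · -- fU ; derive gV
      have hgV : f (pv (2*(n+n)) (2*jj)) = xV2 n jj := by
        rcases cB2 with h4|h4|h4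
        · exact absurd (h3.symm.trans (inv_eq hinv h4)) (by simp [pu, pv])
        · exact absurd (hv1.symm.trans (inv_eq hinv h4)) (by simp [pu, pv])
        · exact h4
      rw [ind_neg ngU, ind_pos hgV, ind_pos h3, ind_neg nfV]
    · exact absurd ((inv_eq hinv h3).symm.trans h) (by simp [pu, pv])
    · -- f u₂ = v₂
      have hv2 := inv_eq hinv h3
      have nfU : ¬ f (pu (2*(n+n)) (2*jj)) = pu (2*(n+n)) (2*jj+1) :=
        fun hc => (by simp [pu, pv] : ¬ pv (2*(n+n)) (2*jj) = pu (2*(n+n)) (2*jj+1))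
          (h3.symm.trans hc)
      have ngV : ¬ f (pv (2*(n+n)) (2*jj)) = xV2 n jj :=
        fun hc => (xV2_ne_pu (a := 2*jj)) ((hv2.symm.trans hc).symm)
      rw [ind_neg ngU, ind_neg ngV, ind_neg nfU, ind_neg nfV]

lemma junction (n : ℕ) (hn : 1 ≤ n)
    (f : PapVert (2*(n+n)) → PapVert (2*(n+n))) (hinv : ∀ w, f (f w) = w)
    (jj : ℕ) (hj1 : 1 ≤ jj) (hj2 : jj ≤ 2*n-1) (hjn : jj ≠ n) :
    (gUp n f (jj+1) ↔ fUp n f jj) ∧ (gVp n f (jj+1) ↔ fVp n f jj) := by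
  constructor
  · unfold gUp fUp
    rw [show 2*(jj+1)-1 = 2*jj+1 from by omega, show 2*(jj+1)-2 = 2*jj from by omega]
    exact ⟨fun h => inv_eq hinv h, fun h => inv_eq hinv h⟩
  · unfold gVp fVp
    rw [show xV2 n (jj+1) = pv (2*(n+n)) (2*jj-1) from by
          rw [xV2, if_neg (by omega), show 2*(jj+1)-3 = 2*jj-1 from by omega],
        show xV1 n jj = pv (2*(n+n)) (2*(jj+1)) from by
          rw [xV1, if_neg (by omega), show 2*jj+2 = 2*(jj+1) from by omega]]
    exact ⟨fun h => inv_eq hinv h, fun h => inv_eq hinv h⟩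

lemma chain1 (n : ℕ) (hn : 1 ≤ n)
    (f : PapVert (2*(n+n)) → PapVert (2*(n+n)))
    (hadj : ∀ w, s(w, f w) ∈ papillonEdges n n) (hinv : ∀ w, f (f w) = w) :
    ∀ d : ℕ, d ≤ n-1 →
      ind (fUp n f (1+d)) + ind (fVp n f (1+d)) = ind (gUp n f 1) + ind (gVp n f 1) := by
  intro d
  induction d with
  | zero => exact fun _ => (local_count n hn f hadj hinv 1 le_rfl (by omega)).symm
  | succ d ih =>
    intro hd
    have hih := ih (by omega)
    have hj := junction n hn f hinv (1+d) (by omega) (by omega) (by omega)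
    have hl := local_count n hn f hadj hinv (1+(d+1)) (by omega) (by omega)
    rw [← hl, show 1+(d+1) = (1+d)+1 from by omega, ind_congr hj.1, ind_congr hj.2, hih]

lemma chain2 (n : ℕ) (hn : 1 ≤ n)
    (f : PapVert (2*(n+n)) → PapVert (2*(n+n)))
    (hadj : ∀ w, s(w, f w) ∈ papillonEdges n n) (hinv : ∀ w, f (f w) = w) :
    ∀ d : ℕ, d ≤ n-1 →
      ind (fUp n f (n+1+d)) + ind (fVp n f (n+1+d)) =
        ind (gUp n f (n+1)) + ind (gVp n f (n+1)) := by
  intro d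
  induction d with
  | zero => exact fun _ => (local_count n hn f hadj hinv (n+1) (by omega) (by omega)).symm
  | succ d ih =>
    intro hd
    have hih := ih (by omega)
    have hj := junction n hn f hinv (n+1+d) (by omega) (by omega) (by omega)
    have hl := local_count n hn f hadj hinv (n+1+(d+1)) (by omega) (by omega)
    rw [← hl, show n+1+(d+1) = (n+1+d)+1 from by omega, ind_congr hj.1, ind_congr hj.2, hih]

/-- If a perfect matching `M` of the balanced papillon graph `P_n` meets the principal
4-edge-cut `X` in exactly two edges, then for every `j ∈ {1, …, 2n}` the set `M ∩ ∂T_j`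
consists of exactly two edges, and these two edges are neither the pair consisting of the
edge of `∂T_j` at `u_{2j-1}` together with the edge of `∂T_j` at `v_{2j}`, nor the pair
consisting of the edge of `∂T_j` at `u_{2j}` together with the edge of `∂T_j` at
`v_{2j-1}`. -/
theorem statement11 (n : ℕ) (hn : 1 ≤ n) (M : Set (Sym2 (PapVert (2 * (n + n)))))
    (hM : IsPerfMatching (papillon n n) M) (h2 : (M ∩ Xcut n).ncard = 2)
    (j : ℕ) (hj1 : 1 ≤ j) (hj2 : j ≤ 2 * n) :
    (M ∩ boundaryT n j).ncard = 2 ∧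
    ¬ ((∃ e ∈ M ∩ boundaryT n j, pu (2 * (n + n)) (2 * j - 1) ∈ e) ∧
       (∃ e ∈ M ∩ boundaryT n j, pv (2 * (n + n)) (2 * j) ∈ e)) ∧
    ¬ ((∃ e ∈ M ∩ boundaryT n j, pu (2 * (n + n)) (2 * j) ∈ e) ∧
       (∃ e ∈ M ∩ boundaryT n j, pv (2 * (n + n)) (2 * j - 1) ∈ e)) := by
  classical
  -- extract the partner function of the perfect matching
  have hex : ∀ w : PapVert (2*(n+n)), ∃ x, s(w, x) ∈ M ∧ ∀ e ∈ M, w ∈ e → e = s(w, x) := by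
    intro w
    obtain ⟨e, ⟨heM, hwe⟩, huniq⟩ := hM.2 w
    obtain ⟨x, rfl⟩ := Sym2.mem_iff_exists.mp hwe
    exact ⟨x, heM, fun e' he' hwe' => huniq e' ⟨he', hwe'⟩⟩
  choose f hfM hfU using hex
  have hedgeS : ∀ w, s(w, f w) ∈ (papillon n n).edgeSet := fun w => hM.1 (hfM w)
  have hadj : ∀ w, s(w, f w) ∈ papillonEdges n n := by
    intro w
    have h := hedgeS w
    rw [papillon, SimpleGraph.edgeSet_fromEdgeSet] at h
    exact h.1
  have hndiag : ∀ w, w ≠ f w := by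
    intro w hc
    have h := hedgeS w
    rw [papillon, SimpleGraph.edgeSet_fromEdgeSet] at h
    exact h.2 (Sym2.mk_isDiag_iff.mpr hc)
  have hinv : ∀ w, f (f w) = w := by
    intro w
    have h := hfU (f w) (s(w, f w)) (hfM w) (Sym2.mem_iff.mpr (Or.inr rfl))
    rw [Sym2.eq_iff] at h
    rcases h with ⟨h1, _⟩ | ⟨h1, _⟩
    · exact absurd h1 (hndiag w)
    · exact h1.symm
  have hmem : ∀ w x, s(w, x) ∈ M ↔ f w = x := by
    intro w x
    constructor
    · intro h
      have h5 := hfU w _ h (Sym2.mem_iff.mpr (Or.inl rfl))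
      exact (Sym2.congr_right.mp h5).symm
    · rintro rfl
      exact hfM w
  -- the four cut edges
  set ea := s(pu (2*(n+n)) 1, pu (2*(n+n)) (4*n)) with hea
  set eb := s(pv (2*(n+n)) (2*n-1), pv (2*(n+n)) (4*n-1)) with heb
  set ec := s(pv (2*(n+n)) 2, pv (2*(n+n)) (2*n+2)) with hec
  set ed := s(pu (2*(n+n)) (2*n), pu (2*(n+n)) (2*n+1)) with hed
  -- distinctness of the cut edges
  have dab : ea ≠ eb := by
    rw [hea, heb]
    intro hc
    rw [Sym2.eq_iff] at hc
    rcases hc with ⟨hc1, _⟩ | ⟨hc1, _⟩ <;> exact pu_ne_pv' hc1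
  have dac : ea ≠ ec := by
    rw [hea, hec]
    intro hc
    rw [Sym2.eq_iff] at hc
    rcases hc with ⟨hc1, _⟩ | ⟨hc1, _⟩ <;> exact pu_ne_pv' hc1
  have dad : ea ≠ ed := by
    rw [hea, hed]
    intro hc
    rw [Sym2.eq_iff] at hc
    rcases hc with ⟨hc1, _⟩ | ⟨hc1, _⟩
    · exact puNe' hn (by omega) (by omega) (by omega) (by omega) (by omega) hc1
    · exact puNe' hn (by omega) (by omega) (by omega) (by omega) (by omega) hc1
  have dbc : eb ≠ ec := by
    rw [heb, hec]
    intro hc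
    rw [Sym2.eq_iff] at hc
    rcases hc with ⟨hc1, _⟩ | ⟨hc1, _⟩
    · exact pvNe' hn (by omega) (by omega) (by omega) (by omega) (by omega) hc1
    · exact pvNe' hn (by omega) (by omega) (by omega) (by omega) (by omega) hc1
  have dbd : eb ≠ ed := by
    rw [heb, hed]
    intro hc
    rw [Sym2.eq_iff] at hc
    rcases hc with ⟨hc1, _⟩ | ⟨hc1, _⟩ <;> exact pv_ne_pu' hc1
  have dcd : ec ≠ ed := by
    rw [hec, hed]
    intro hc
    rw [Sym2.eq_iff] at hc
    rcases hc with ⟨hc1, _⟩ | ⟨hc1, _⟩ <;> exact pv_ne_pu' hc1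
  -- |M ∩ X| = 2 in indicator form
  have hXeq : M ∩ Xcut n = ↑(({ea, eb, ec, ed} : Finset _).filter (· ∈ M)) := by
    ext e
    simp only [Finset.coe_filter, Finset.mem_insert, Finset.mem_singleton, Set.mem_setOf_eq,
      Set.mem_inter_iff, Xcut, Set.mem_insert_iff, Set.mem_singleton_iff, hea, heb, hec, hed]
    tauto
  rw [hXeq, Set.ncard_coe_finset] at h2
  have hABCD : ind (ea ∈ M) + ind (eb ∈ M) + ind (ec ∈ M) + ind (ed ∈ M) = 2 := by
    rw [Finset.card_filter] at h2
    rw [Finset.sum_insert (by simp [dab, dac, dad]), Finset.sum_insert (by simp [dbc, dbd]),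
      Finset.sum_insert (by simp [dcd]), Finset.sum_singleton] at h2
    by_cases p1 : ea ∈ M <;> by_cases p2 : eb ∈ M <;> by_cases p3 : ec ∈ M <;>
      by_cases p4 : ed ∈ M <;> simp [ind, p1, p2, p3, p4] at h2 ⊢ <;> omega
  -- bridges between the chain endpoints and the cut edges
  have hgU1 : gUp n f 1 ↔ ea ∈ M := by
    unfold gUp
    rw [hea, hmem, show 2*1-1 = 1 from rfl, show 2*1-2 = 0 from rfl,
      show pu (2*(n+n)) 0 = pu (2*(n+n)) (4*n) from pu_eq_iff.mpr (cast_eq_of (by omega))]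
  have hgV1 : gVp n f 1 ↔ ec ∈ M := by
    unfold gVp
    rw [hec, hmem, show (2*1 : ℕ) = 2 from rfl, xV2, if_pos (Or.inl rfl),
      show 2*1+2*n = 2*n+2 from by omega]
  have hfUn : fUp n f n ↔ ed ∈ M := by
    unfold fUp
    rw [hed, hmem]
  have hfVn : fVp n f n ↔ eb ∈ M := by
    unfold fVp
    rw [heb, hmem, xV1, if_pos (Or.inl rfl), show 2*n-1+2*n = 4*n-1 from by omega]
  have hgUn1 : gUp n f (n+1) ↔ ed ∈ M := by
    unfold gUp
    rw [hed, hmem, show 2*(n+1)-1 = 2*n+1 from by omega, show 2*(n+1)-2 = 2*n from by omega]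
    exact ⟨fun h => inv_eq hinv h, fun h => inv_eq hinv h⟩
  have hgVn1 : gVp n f (n+1) ↔ ec ∈ M := by
    unfold gVp
    rw [hec, hmem, xV2, if_pos (Or.inr rfl),
      show pv (2*(n+n)) (2*(n+1)+2*n) = pv (2*(n+n)) 2 from pv_eq_iff.mpr (cast_eq_of (by omega)),
      show 2*(n+1) = 2*n+2 from by omega]
    exact ⟨fun h => inv_eq hinv h, fun h => inv_eq hinv h⟩
  have hfU2n : fUp n f (2*n) ↔ ea ∈ M := by
    unfold fUp
    rw [hea, hmem, show 2*(2*n) = 4*n from by omega,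
      show pu (2*(n+n)) (4*n+1) = pu (2*(n+n)) 1 from pu_eq_iff.mpr (cast_eq_of (by omega))]
    exact ⟨fun h => inv_eq hinv h, fun h => inv_eq hinv h⟩
  have hfV2n : fVp n f (2*n) ↔ eb ∈ M := by
    unfold fVp
    rw [heb, hmem, xV1, if_pos (Or.inr rfl),
      show pv (2*(n+n)) (2*(2*n)-1+2*n) = pv (2*(n+n)) (2*n-1) from
        pv_eq_iff.mpr (cast_eq_of (by omega)),
      show 2*(2*n)-1 = 4*n-1 from by omega]
    exact ⟨fun h => inv_eq hinv h, fun h => inv_eq hinv h⟩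
  -- the linear system
  have hS1 := chain1 n hn f hadj hinv (n-1) le_rfl
  rw [show 1+(n-1) = n from by omega, ind_congr hfUn, ind_congr hfVn,
    ind_congr hgU1, ind_congr hgV1] at hS1
  have hS2 := chain2 n hn f hadj hinv (n-1) le_rfl
  rw [show n+1+(n-1) = 2*n from by omega, ind_congr hfU2n, ind_congr hfV2n,
    ind_congr hgUn1, ind_congr hgVn1] at hS2
  -- the sums at the target j
  have hfsum : ind (fUp n f j) + ind (fVp n f j) = 1 := by
    rcases le_or_gt j n with hcase | hcase
    · have hT := chain1 n hn f hadj hinv (j-1) (by omega)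
      rw [show 1+(j-1) = j from by omega, ind_congr hgU1, ind_congr hgV1] at hT
      have l1 := ind_le (ea ∈ M); have l2 := ind_le (eb ∈ M)
      have l3 := ind_le (ec ∈ M); have l4 := ind_le (ed ∈ M)
      omega
    · have hT := chain2 n hn f hadj hinv (j-(n+1)) (by omega)
      rw [show n+1+(j-(n+1)) = j from by omega, ind_congr hgUn1, ind_congr hgVn1] at hT
      have l1 := ind_le (ea ∈ M); have l2 := ind_le (eb ∈ M)
      have l3 := ind_le (ec ∈ M); have l4 := ind_le (ed ∈ M)
      omega
  have hgsum : ind (gUp n f j) + ind (gVp n f j) = 1 := by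
    rw [local_count n hn f hadj hinv j hj1 hj2]
    exact hfsum
  -- distinctness facts at T_j
  have d1 : pu (2*(n+n)) (2*j) ≠ pu (2*(n+n)) (2*j-2) :=
    puNe' hn (by omega) (by omega) (by omega) (by omega) (by omega)
  have d3 : pu (2*(n+n)) (2*j-1) ≠ pu (2*(n+n)) (2*j+1) :=
    puNe' hn (by omega) (by omega) (by omega) (by omega) (by omega)
  have d5 : pu (2*(n+n)) (2*j-1) ≠ pu (2*(n+n)) (2*j) :=
    puNe' hn (by omega) (by omega) (by omega) (by omega) (by omega)
  have d6 : pu (2*(n+n)) (2*j-2) ≠ pu (2*(n+n)) (2*j-1) :=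
    puNe' hn (by omega) (by omega) (by omega) (by omega) (by omega)
  have d7 : pu (2*(n+n)) (2*j+1) ≠ pu (2*(n+n)) (2*j) :=
    puNe' hn (by omega) (by omega) (by omega) (by omega) (by omega)
  have d8 : pv (2*(n+n)) (2*j-1) ≠ pv (2*(n+n)) (2*j) :=
    pvNe' hn (by omega) (by omega) (by omega) (by omega) (by omega)
  have dx1 : pv (2*(n+n)) (2*j) ≠ xV1 n j := pv_ne_xV1 hn hj1 hj2
  have dx1' : pv (2*(n+n)) (2*j-1) ≠ xV1 n j := pv_ne_xV1' hn hj1 hj2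
  have dx2 : pv (2*(n+n)) (2*j-1) ≠ xV2 n j := pv_ne_xV2 hn hj1 hj2
  have dx2' : pv (2*(n+n)) (2*j) ≠ xV2 n j := pv_ne_xV2' hn hj1 hj2
  have hTmem : ∀ x, x ∈ Tverts n j ↔ x = pu (2*(n+n)) (2*j-1) ∨ x = pu (2*(n+n)) (2*j) ∨
      x = pv (2*(n+n)) (2*j-1) ∨ x = pv (2*(n+n)) (2*j) := by
    intro x
    simp [Tverts]
  have hT1 : pu (2*(n+n)) (2*j-1) ∈ Tverts n j := (hTmem _).mpr (Or.inl rfl)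
  have hT2 : pu (2*(n+n)) (2*j) ∈ Tverts n j := (hTmem _).mpr (Or.inr (Or.inl rfl))
  have hT3 : pv (2*(n+n)) (2*j-1) ∈ Tverts n j := (hTmem _).mpr (Or.inr (Or.inr (Or.inl rfl)))
  have hT4 : pv (2*(n+n)) (2*j) ∈ Tverts n j := (hTmem _).mpr (Or.inr (Or.inr (Or.inr rfl)))
  have hN1 : pu (2*(n+n)) (2*j-2) ∉ Tverts n j := by
    rw [hTmem]
    push_neg
    exact ⟨d6, fun hc => d1 hc.symm, pu_ne_pv', pu_ne_pv'⟩
  have hN2 : pu (2*(n+n)) (2*j+1) ∉ Tverts n j := by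
    rw [hTmem]
    push_neg
    exact ⟨fun hc => d3 hc.symm, d7, pu_ne_pv', pu_ne_pv'⟩
  have hN3 : xV1 n j ∉ Tverts n j := by
    rw [hTmem]
    push_neg
    exact ⟨xV1_ne_pu, xV1_ne_pu, fun hc => dx1' hc.symm, fun hc => dx1 hc.symm⟩
  have hN4 : xV2 n j ∉ Tverts n j := by
    rw [hTmem]
    push_neg
    exact ⟨xV2_ne_pu, xV2_ne_pu, fun hc => dx2 hc.symm, fun hc => dx2' hc.symm⟩
  -- classification at T_j
  have cA1 := classify_u n (2*j-1) (by omega) _ (hadj (pu (2*(n+n)) (2*j-1)))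
  rw [show 2*j-1+1 = 2*j from by omega, show 2*j-1-1 = 2*j-2 from by omega] at cA1
  have cA2 := classify_u n (2*j) (by omega) _ (hadj (pu (2*(n+n)) (2*j)))
  have cB1 := classify_v1 n hn j hj1 hj2 _ (hadj (pv (2*(n+n)) (2*j-1)))
  have cB2 := classify_v2 n hn j hj1 hj2 _ (hadj (pv (2*(n+n)) (2*j)))
  -- boundary characterization
  have hbnd : ∀ e, e ∈ M ∩ boundaryT n j ↔
      (gUp n f j ∧ e = s(pu (2*(n+n)) (2*j-1), pu (2*(n+n)) (2*j-2))) ∨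
      (fUp n f j ∧ e = s(pu (2*(n+n)) (2*j), pu (2*(n+n)) (2*j+1))) ∨
      (fVp n f j ∧ e = s(pv (2*(n+n)) (2*j-1), xV1 n j)) ∨
      (gVp n f j ∧ e = s(pv (2*(n+n)) (2*j), xV2 n j)) := by
    intro e
    constructor
    · rintro ⟨heM, heE, x, y, rfl, hxT, hyT⟩
      have hyx : y = f x := Sym2.congr_right.mp (hfU x _ heM (Sym2.mem_iff.mpr (Or.inl rfl)))
      subst hyx
      rw [hTmem] at hxT
      rcases hxT with rfl|rfl|rfl|rfl
      · rcases cA1 with h|h|h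
        · exact absurd (show f (pu (2*(n+n)) (2*j-1)) ∈ Tverts n j by rw [h]; exact hT2) hyT
        · exact Or.inl ⟨h, by rw [h]⟩
        · exact absurd (show f (pu (2*(n+n)) (2*j-1)) ∈ Tverts n j by rw [h]; exact hT3) hyT
      · rcases cA2 with h|h|h
        · exact Or.inr (Or.inl ⟨h, by rw [h]⟩)
        · exact absurd (show f (pu (2*(n+n)) (2*j)) ∈ Tverts n j by rw [h]; exact hT1) hyT
        · exact absurd (show f (pu (2*(n+n)) (2*j)) ∈ Tverts n j by rw [h]; exact hT4) hyT
      · rcases cB1 with h|h|h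
        · exact absurd (show f (pv (2*(n+n)) (2*j-1)) ∈ Tverts n j by rw [h]; exact hT1) hyT
        · exact absurd (show f (pv (2*(n+n)) (2*j-1)) ∈ Tverts n j by rw [h]; exact hT4) hyT
        · exact Or.inr (Or.inr (Or.inl ⟨h, by rw [h]⟩))
      · rcases cB2 with h|h|h
        · exact absurd (show f (pv (2*(n+n)) (2*j)) ∈ Tverts n j by rw [h]; exact hT2) hyT
        · exact absurd (show f (pv (2*(n+n)) (2*j)) ∈ Tverts n j by rw [h]; exact hT3) hyT
        · exact Or.inr (Or.inr (Or.inr ⟨h, by rw [h]⟩))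
    · rintro (⟨hP, rfl⟩|⟨hP, rfl⟩|⟨hP, rfl⟩|⟨hP, rfl⟩)
      · have hMe : s(pu (2*(n+n)) (2*j-1), pu (2*(n+n)) (2*j-2)) ∈ M := (hmem _ _).mpr hP
        exact ⟨hMe, hM.1 hMe, _, _, rfl, hT1, hN1⟩
      · have hMe : s(pu (2*(n+n)) (2*j), pu (2*(n+n)) (2*j+1)) ∈ M := (hmem _ _).mpr hP
        exact ⟨hMe, hM.1 hMe, _, _, rfl, hT2, hN2⟩
      · have hMe : s(pv (2*(n+n)) (2*j-1), xV1 n j) ∈ M := (hmem _ _).mpr hP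
        exact ⟨hMe, hM.1 hMe, _, _, rfl, hT3, hN3⟩
      · have hMe : s(pv (2*(n+n)) (2*j), xV2 n j) ∈ M := (hmem _ _).mpr hP
        exact ⟨hMe, hM.1 hMe, _, _, rfl, hT4, hN4⟩
  -- distinctness of boundary edges
  have neUU : s(pu (2*(n+n)) (2*j-1), pu (2*(n+n)) (2*j-2)) ≠
      s(pu (2*(n+n)) (2*j), pu (2*(n+n)) (2*j+1)) := by
    intro hc
    rw [Sym2.eq_iff] at hc
    rcases hc with ⟨hc1, _⟩|⟨hc1, _⟩
    · exact d5 hc1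
    · exact d3 hc1
  have neU1V1 : s(pu (2*(n+n)) (2*j-1), pu (2*(n+n)) (2*j-2)) ≠
      s(pv (2*(n+n)) (2*j-1), xV1 n j) := by
    intro hc
    rw [Sym2.eq_iff] at hc
    rcases hc with ⟨hc1, _⟩|⟨hc1, _⟩
    · exact pu_ne_pv' hc1
    · exact xV1_ne_pu hc1.symm
  have neU2V2 : s(pu (2*(n+n)) (2*j), pu (2*(n+n)) (2*j+1)) ≠
      s(pv (2*(n+n)) (2*j), xV2 n j) := by
    intro hc
    rw [Sym2.eq_iff] at hc
    rcases hc with ⟨hc1, _⟩|⟨hc1, _⟩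
    · exact pu_ne_pv' hc1
    · exact xV2_ne_pu hc1.symm
  have neV1V2 : s(pv (2*(n+n)) (2*j-1), xV1 n j) ≠
      s(pv (2*(n+n)) (2*j), xV2 n j) := by
    intro hc
    rw [Sym2.eq_iff] at hc
    rcases hc with ⟨hc1, _⟩|⟨hc1, _⟩
    · exact d8 hc1
    · exact dx2 hc1
  -- the four cases
  rcases ind_sum_one hgsum with ⟨hgU, hngV⟩ | ⟨hngU, hgV⟩ <;>
    rcases ind_sum_one hfsum with ⟨hfU2, hnfV⟩ | ⟨hnfU, hfV⟩
  · -- pattern U1 U2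
    have hset : M ∩ boundaryT n j = {s(pu (2*(n+n)) (2*j-1), pu (2*(n+n)) (2*j-2)),
        s(pu (2*(n+n)) (2*j), pu (2*(n+n)) (2*j+1))} := by
      ext e
      rw [hbnd e]
      simp only [Set.mem_insert_iff, Set.mem_singleton_iff]
      constructor
      · rintro (⟨_, rfl⟩|⟨_, rfl⟩|⟨hP, _⟩|⟨hP, _⟩)
        · exact Or.inl rfl
        · exact Or.inr rfl
        · exact absurd hP hnfV
        · exact absurd hP hngV
      · rintro (rfl|rfl)
        · exact Or.inl ⟨hgU, rfl⟩
        · exact Or.inr (Or.inl ⟨hfU2, rfl⟩)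
    refine ⟨by rw [hset]; exact Set.ncard_pair neUU, ?_, ?_⟩
    · rintro ⟨-, e, he, hve⟩
      rw [hset] at he
      simp only [Set.mem_insert_iff, Set.mem_singleton_iff] at he
      rcases he with rfl|rfl <;> rw [Sym2.mem_iff] at hve <;>
        rcases hve with hc|hc <;> exact pv_ne_pu' hc
    · rintro ⟨-, e, he, hve⟩
      rw [hset] at he
      simp only [Set.mem_insert_iff, Set.mem_singleton_iff] at he
      rcases he with rfl|rfl <;> rw [Sym2.mem_iff] at hve <;>
        rcases hve with hc|hc <;> exact pv_ne_pu' hc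
  · -- pattern U1 V1
    have hset : M ∩ boundaryT n j = {s(pu (2*(n+n)) (2*j-1), pu (2*(n+n)) (2*j-2)),
        s(pv (2*(n+n)) (2*j-1), xV1 n j)} := by
      ext e
      rw [hbnd e]
      simp only [Set.mem_insert_iff, Set.mem_singleton_iff]
      constructor
      · rintro (⟨_, rfl⟩|⟨hP, _⟩|⟨_, rfl⟩|⟨hP, _⟩)
        · exact Or.inl rfl
        · exact absurd hP hnfU
        · exact Or.inr rfl
        · exact absurd hP hngV
      · rintro (rfl|rfl)
        · exact Or.inl ⟨hgU, rfl⟩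
        · exact Or.inr (Or.inr (Or.inl ⟨hfV, rfl⟩))
    refine ⟨by rw [hset]; exact Set.ncard_pair neU1V1, ?_, ?_⟩
    · rintro ⟨-, e, he, hve⟩
      rw [hset] at he
      simp only [Set.mem_insert_iff, Set.mem_singleton_iff] at he
      rcases he with rfl|rfl <;> rw [Sym2.mem_iff] at hve
      · rcases hve with hc|hc <;> exact pv_ne_pu' hc
      · rcases hve with hc|hc
        · exact d8 hc.symm
        · exact dx1 hc
    · rintro ⟨⟨e, he, hve⟩, -⟩
      rw [hset] at he
      simp only [Set.mem_insert_iff, Set.mem_singleton_iff] at he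
      rcases he with rfl|rfl <;> rw [Sym2.mem_iff] at hve
      · rcases hve with hc|hc
        · exact d5 hc.symm
        · exact d1 hc
      · rcases hve with hc|hc
        · exact pu_ne_pv' hc
        · exact xV1_ne_pu hc.symm
  · -- pattern U2 V2
    have hset : M ∩ boundaryT n j = {s(pu (2*(n+n)) (2*j), pu (2*(n+n)) (2*j+1)),
        s(pv (2*(n+n)) (2*j), xV2 n j)} := by
      ext e
      rw [hbnd e]
      simp only [Set.mem_insert_iff, Set.mem_singleton_iff]
      constructor
      · rintro (⟨hP, _⟩|⟨_, rfl⟩|⟨hP, _⟩|⟨_, rfl⟩)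
        · exact absurd hP hngU
        · exact Or.inl rfl
        · exact absurd hP hnfV
        · exact Or.inr rfl
      · rintro (rfl|rfl)
        · exact Or.inr (Or.inl ⟨hfU2, rfl⟩)
        · exact Or.inr (Or.inr (Or.inr ⟨hgV, rfl⟩))
    refine ⟨by rw [hset]; exact Set.ncard_pair neU2V2, ?_, ?_⟩
    · rintro ⟨⟨e, he, hve⟩, -⟩
      rw [hset] at he
      simp only [Set.mem_insert_iff, Set.mem_singleton_iff] at he
      rcases he with rfl|rfl <;> rw [Sym2.mem_iff] at hve
      · rcases hve with hc|hc
        · exact d5 hc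
        · exact d3 hc
      · rcases hve with hc|hc
        · exact pu_ne_pv' hc
        · exact xV2_ne_pu hc.symm
    · rintro ⟨-, e, he, hve⟩
      rw [hset] at he
      simp only [Set.mem_insert_iff, Set.mem_singleton_iff] at he
      rcases he with rfl|rfl <;> rw [Sym2.mem_iff] at hve
      · rcases hve with hc|hc <;> exact pv_ne_pu' hc
      · rcases hve with hc|hc
        · exact d8 hc
        · exact dx2 hc
  · -- pattern V1 V2
    have hset : M ∩ boundaryT n j = {s(pv (2*(n+n)) (2*j-1), xV1 n j),
        s(pv (2*(n+n)) (2*j), xV2 n j)} := by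
      ext e
      rw [hbnd e]
      simp only [Set.mem_insert_iff, Set.mem_singleton_iff]
      constructor
      · rintro (⟨hP, _⟩|⟨hP, _⟩|⟨_, rfl⟩|⟨_, rfl⟩)
        · exact absurd hP hngU
        · exact absurd hP hnfU
        · exact Or.inl rfl
        · exact Or.inr rfl
      · rintro (rfl|rfl)
        · exact Or.inr (Or.inr (Or.inl ⟨hfV, rfl⟩))
        · exact Or.inr (Or.inr (Or.inr ⟨hgV, rfl⟩))
    refine ⟨by rw [hset]; exact Set.ncard_pair neV1V2, ?_, ?_⟩
    · rintro ⟨⟨e, he, hve⟩, -⟩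
      rw [hset] at he
      simp only [Set.mem_insert_iff, Set.mem_singleton_iff] at he
      rcases he with rfl|rfl <;> rw [Sym2.mem_iff] at hve
      · rcases hve with hc|hc
        · exact pu_ne_pv' hc
        · exact xV1_ne_pu hc.symm
      · rcases hve with hc|hc
        · exact pu_ne_pv' hc
        · exact xV2_ne_pu hc.symm
    · rintro ⟨⟨e, he, hve⟩, -⟩
      rw [hset] at he
      simp only [Set.mem_insert_iff, Set.mem_singleton_iff] at he
      rcases he with rfl|rfl <;> rw [Sym2.mem_iff] at hve
      · rcases hve with hc|hc
        · exact pu_ne_pv' hc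
        · exact xV1_ne_pu hc.symm
      · rcases hve with hc|hc
        · exact pu_ne_pv' hc
        · exact xV2_ne_pu hc.symm
end
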